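/- arXiv:0802.0898 — 6 statements merged into one kernel-verified Lean document; each statement's English description precedes it below -/
import Mathlib

section
/- Let f be a bounded holomorphic function on the bidisc D², continuous on the closed bidisc, with ‖f‖_∞ ≤ 1, such that f has no zeros on D × closure(D). Then there exists M > 0 such that for all z, w in D, 1/|f(z,w)| ≤ exp(M/(1−|z|)). -/
open Metric Complex
open scoped NNReal

/-- Holomorphic logarithm on the unit disc. -/
lemma exists_log_on_ball {g : ℂ → ℂ} (hg : DifferentiableOn ℂ g (ball (0:ℂ) 1))
    (hne : ∀ z ∈ ball (0:ℂ) 1, g z ≠ 0) :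
    ∃ h : ℂ → ℂ, DifferentiableOn ℂ h (ball (0:ℂ) 1) ∧ h 0 = Complex.log (g 0) ∧
      ∀ z ∈ ball (0:ℂ) 1, Complex.exp (h z) = g z := by
  set u : ℂ → ℂ := fun z => deriv g z / g z with hu_def
  have hganal : AnalyticOnNhd ℂ g (ball (0:ℂ) 1) := hg.analyticOnNhd isOpen_ball
  have hdg : DifferentiableOn ℂ (deriv g) (ball (0:ℂ) 1) :=
    fun z hz => (hganal.deriv z hz).differentiableAt.differentiableWithinAt
  have hu : DifferentiableOn ℂ u (ball (0:ℂ) 1) := hdg.div hg hne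
  -- power series of u on each smaller ball
  have hdc : ∀ r : ℝ≥0, 0 < r → (r:ℝ) < 1 → DiffContOnCl ℂ u (ball (0:ℂ) r) := by
    intro r hr hr1
    refine ⟨hu.mono (ball_subset_ball hr1.le), (hu.continuousOn).mono ?_⟩
    rw [closure_ball (0:ℂ) (by exact_mod_cast hr.ne')]
    exact closedBall_subset_ball hr1
  set p := cauchyPowerSeries u 0 (1/2 : ℝ≥0) with hp_def
  have hp0 : HasFPowerSeriesOnBall u p 0 (1/2 : ℝ≥0) :=
    (hdc (1/2) (by norm_num) (by norm_num)).hasFPowerSeriesOnBall (by norm_num)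
  have key : ∀ r : ℝ≥0, 0 < r → (r:ℝ) < 1 → HasFPowerSeriesOnBall u p 0 r := by
    intro r hr hr1
    exact hp0.exchange_radius ((hdc r hr hr1).hasFPowerSeriesOnBall (by exact_mod_cast hr))
  have hrad : ∀ r : ℝ≥0, (r:ℝ) < 1 → (r : ENNReal) < p.radius := by
    intro r hr1
    rcases exists_between hr1 with ⟨t, htr, ht1⟩
    have ht0 : (0:ℝ) < t := lt_of_le_of_lt r.coe_nonneg htr
    have := (key t.toNNReal (by simpa using ht0) (by simpa [Real.coe_toNNReal _ ht0.le] using ht1)).r_le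
    refine lt_of_lt_of_le ?_ this
    exact_mod_cast (by simpa [← NNReal.coe_lt_coe, Real.coe_toNNReal _ ht0.le] using htr :
      r < t.toNNReal)
  -- the primitive
  set F : ℂ → ℂ := fun z => ∑' n : ℕ, (p.coeff n / (n + 1)) * z ^ (n + 1) with hF_def
  have hFderiv : ∀ z ∈ ball (0:ℂ) 1, HasDerivAt F (u z) z := by
    intro z hz
    rw [mem_ball_zero_iff] at hz
    rcases exists_between hz with ⟨t, hzt, ht1⟩
    have ht0 : (0:ℝ) < t := lt_of_le_of_lt (norm_nonneg _) hzt
    set r : ℝ≥0 := t.toNNReal with hr_def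
    have hrt : (r : ℝ) = t := Real.coe_toNNReal _ ht0.le
    have hr0 : (0:ℝ≥0) < r := Real.toNNReal_pos.mpr ht0
    have hr1 : (r : ℝ) < 1 := by rwa [hrt]
    have hsum : Summable fun n : ℕ => ‖p n‖ * (r:ℝ) ^ n :=
      p.summable_norm_mul_pow (hrad r hr1)
    have hzr : z ∈ ball (0:ℂ) (r:ℝ) := by rw [mem_ball_zero_iff, hrt]; exact hzt
    have hmain : HasDerivAt F (∑' n : ℕ, p.coeff n * z ^ n) z := by
      refine hasDerivAt_tsum_of_isPreconnected hsum isOpen_ball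
        (convex_ball (0:ℂ) (r:ℝ)).isPreconnected
        (g := fun n w => (p.coeff n / (n + 1)) * w ^ (n + 1))
        (g' := fun n w => p.coeff n * w ^ n)
        (fun n w hw => ?_) (fun n w hw => ?_)
        (mem_ball_self (by exact_mod_cast hr0)) ?_ hzr
      · have h1 := (hasDerivAt_pow (n + 1) w).const_mul (p.coeff n / ((n:ℂ) + 1))
        have hne' : (n : ℂ) + 1 ≠ 0 := Nat.cast_add_one_ne_zero n
        have : p.coeff n / ((n:ℂ) + 1) * (((n:ℕ) + 1 : ℕ) * w ^ (n + 1 - 1)) =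
            p.coeff n * w ^ n := by push_cast; field_simp
        rw [this] at h1
        convert h1 using 2 <;> push_cast <;> ring
      · rw [mem_ball_zero_iff] at hw
        rw [norm_mul, norm_pow, p.norm_apply_eq_norm_coef]
        exact mul_le_mul le_rfl (pow_le_pow_left₀ (norm_nonneg _) hw.le n)
          (pow_nonneg (norm_nonneg _) n) (norm_nonneg _)
      · exact summable_zero.congr fun n => by simp
    have hsum_eq : (∑' n : ℕ, p.coeff n * z ^ n) = u z := by
      have hz' : z ∈ Metric.eball (0:ℂ) (r : ENNReal) := by
        rw [Metric.mem_eball, edist_zero_right, enorm_eq_nnnorm]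
        exact_mod_cast (by rw [← hrt] at hzt; exact_mod_cast hzt : ‖z‖₊ < r)
      have hs := (key r hr0 hr1).hasSum hz'
      simp only [zero_add] at hs
      have hs' : HasSum (fun n : ℕ => p.coeff n * z ^ n) (u z) := by
        refine hs.congr_fun fun n => ?_
        rw [FormalMultilinearSeries.apply_eq_pow_smul_coeff, smul_eq_mul, mul_comm]
      exact hs'.tsum_eq
    rwa [hsum_eq] at hmain
  have hFdiff : DifferentiableOn ℂ F (ball (0:ℂ) 1) :=
    fun z hz => (hFderiv z hz).differentiableAt.differentiableWithinAt
  have hF0 : F 0 = 0 := by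
    rw [hF_def]
    simp
  refine ⟨fun z => Complex.log (g 0) + F z, ?_, by simp [hF0], ?_⟩
  · exact (differentiableOn_const _).add hFdiff
  · have h0mem : (0:ℂ) ∈ ball (0:ℂ) 1 := mem_ball_self one_pos
    have hconst : ∀ z ∈ ball (0:ℂ) 1,
        g z * Complex.exp (-(Complex.log (g 0) + F z)) = 1 := by
      set φ : ℂ → ℂ := fun z => g z * Complex.exp (-(Complex.log (g 0) + F z)) with hφ_def
      have hφdiff : DifferentiableOn ℂ φ (ball (0:ℂ) 1) :=
        hg.mul (((differentiableOn_const _).add hFdiff).neg.cexp)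
      have hφderiv : ∀ z ∈ ball (0:ℂ) 1, HasDerivAt φ 0 z := by
        intro z hz
        have hgz : HasDerivAt g (deriv g z) z :=
          (hg.differentiableAt (isOpen_ball.mem_nhds hz)).hasDerivAt
        have hhz : HasDerivAt (fun z => -(Complex.log (g 0) + F z)) (-(u z)) z :=
          (((hFderiv z hz).const_add (Complex.log (g 0)))).neg
        have hez := hhz.cexp
        have := hgz.mul hez
        refine this.congr_deriv ?_
        rw [hu_def]
        have hgz0 : g z ≠ 0 := hne z hz
        field_simp
        ring
      have hφconst : ∀ z ∈ ball (0:ℂ) 1, φ z = φ 0 := by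
        intro z hz
        refine (convex_ball (0:ℂ) 1).is_const_of_fderivWithin_eq_zero (𝕜 := ℂ) hφdiff
          (fun x hx => ?_) hz h0mem
        have hx' := ((hφderiv x hx).hasFDerivAt.hasFDerivWithinAt
          (s := ball (0:ℂ) 1)).fderivWithin (isOpen_ball.uniqueDiffWithinAt hx)
        rw [hx']
        ext y
        simp
      intro z hz
      have h2 := hφconst z hz
      have h3 : φ 0 = 1 := by
        simp only [hφ_def, hF0, add_zero]
        rw [Complex.exp_neg, Complex.exp_log (hne 0 h0mem)]
        exact mul_inv_cancel₀ (hne 0 h0mem)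
      rw [h3] at h2
      exact h2
    intro z hz
    have h1 := hconst z hz
    rw [Complex.exp_neg] at h1
    have hexp : Complex.exp (Complex.log (g 0) + F z) ≠ 0 := Complex.exp_ne_zero _
    field_simp at h1
    exact h1.symm

/-- If `f` is continuous on the closed bidisc, holomorphic on the open bidisc,
bounded by `1`, and has no zeros on `D × closure D`, then `1/|f(z,w)| ≤ exp(M/(1-|z|))`. -/
theorem stmt_0 (f : ℂ × ℂ → ℂ)
    (hcont : ContinuousOn f (closedBall (0:ℂ) 1 ×ˢ closedBall (0:ℂ) 1))
    (hdiff : DifferentiableOn ℂ f (ball (0:ℂ) 1 ×ˢ ball (0:ℂ) 1))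
    (hbound : ∀ p ∈ closedBall (0:ℂ) 1 ×ˢ closedBall (0:ℂ) 1, ‖f p‖ ≤ 1)
    (hne : ∀ z w : ℂ, ‖z‖ < 1 → ‖w‖ ≤ 1 → f (z, w) ≠ 0) :
    ∃ M : ℝ, 0 < M ∧ ∀ z w : ℂ, ‖z‖ < 1 → ‖w‖ < 1 →
      1 / ‖f (z, w)‖ ≤ Real.exp (M / (1 - ‖z‖)) := by
    -- uniform lower bound at z = 0
  have hKc : IsCompact (closedBall (0:ℂ) 1) := isCompact_closedBall _ _
  have hKne : (closedBall (0:ℂ) 1).Nonempty := ⟨0, mem_closedBall_self one_pos.le⟩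
  have hccont : ContinuousOn (fun w => ‖f (0, w)‖) (closedBall (0:ℂ) 1) := by
    apply ContinuousOn.norm
    have : ContinuousOn (fun w : ℂ => ((0:ℂ), w)) (closedBall (0:ℂ) 1) :=
      (continuous_const.prodMk continuous_id).continuousOn
    exact hcont.comp this fun w hw => ⟨mem_closedBall_self one_pos.le, hw⟩
  obtain ⟨w₀, hw₀, hmin⟩ := hKc.exists_isMinOn hKne hccont
  set δ : ℝ := ‖f (0, w₀)‖ with hδ_def
  clear_value δ
  have hδpos : 0 < δ := by
    rw [hδ_def]; exact norm_pos_iff.mpr (hne 0 w₀ (by simp) (by simpa using hw₀))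
  have hδle1 : δ ≤ 1 := by
    rw [hδ_def]; exact hbound (0, w₀) ⟨mem_closedBall_self one_pos.le, hw₀⟩
  have hδmin : ∀ w' ∈ closedBall (0:ℂ) 1, δ ≤ ‖f (0, w')‖ := by
    rw [hδ_def]; exact fun w' hw' => hmin hw'
  set L : ℝ := -Real.log δ with hL_def
  clear_value L
  have hL0 : 0 ≤ L := by
    rw [hL_def, neg_nonneg]
    exact Real.log_nonpos hδpos.le hδle1
  refine ⟨2 * L + 1, by linarith, ?_⟩
  intro z w hz hw
  -- the slice
  set g : ℂ → ℂ := fun z => f (z, w) with hg_def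
  clear_value g
  have hwcb : w ∈ closedBall (0:ℂ) 1 := by simpa using hw.le
  have hgd : DifferentiableOn ℂ g (ball (0:ℂ) 1) := by
    rw [hg_def]
    have hemb : DifferentiableOn ℂ (fun z : ℂ => (z, w)) (ball (0:ℂ) 1) :=
      (differentiable_id.prodMk (differentiable_const w)).differentiableOn
    exact hdiff.comp hemb fun x hx => ⟨hx, by simpa [mem_ball_zero_iff] using hw⟩
  have hgne : ∀ x ∈ ball (0:ℂ) 1, g x ≠ 0 := by
    rw [hg_def]; exact fun x hx => hne x w (mem_ball_zero_iff.mp hx) hw.le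
  have hgb : ∀ x ∈ ball (0:ℂ) 1, ‖g x‖ ≤ 1 := by
    rw [hg_def]; exact fun x hx => hbound (x, w) ⟨ball_subset_closedBall hx, hwcb⟩
  obtain ⟨h, hhd, hh0, hhexp⟩ := exists_log_on_ball hgd hgne
  have h0mem : (0:ℂ) ∈ ball (0:ℂ) 1 := mem_ball_self one_pos
  -- real parts
  have hre : ∀ x ∈ ball (0:ℂ) 1, (h x).re = Real.log ‖g x‖ := by
    intro x hx
    have : ‖g x‖ = Real.exp (h x).re := by
      rw [← hhexp x hx, Complex.norm_exp]
    rw [this, Real.log_exp]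
  -- the auxiliary function H
  set b : ℝ := (h 0).re - 1/3 with hb_def
  clear_value b
  set H : ℂ → ℂ := fun x => h x - (h 0).im * Complex.I - 1/3 with hH_def
  clear_value H
  have hHd : DifferentiableOn ℂ H (ball (0:ℂ) 1) := by
    rw [hH_def]; exact (hhd.sub_const _).sub_const _
  have hHre : ∀ x ∈ ball (0:ℂ) 1, (H x).re = Real.log ‖g x‖ - 1/3 := by
    intro x hx
    rw [hH_def]
    simp [hre x hx]
  have hHreneg : ∀ x ∈ ball (0:ℂ) 1, (H x).re ≤ -(1/3) := by
    intro x hx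
    have h1 : Real.log ‖g x‖ ≤ 0 :=
      Real.log_nonpos (norm_nonneg _) (hgb x hx)
    rw [hHre x hx]; linarith
  have hH0 : H 0 = (b : ℂ) := by
    rw [hH_def, hb_def, Complex.ext_iff]
    constructor <;> simp
  have hbneg : b ≤ -(1/3) := by
    have := hre 0 h0mem
    have h1 : Real.log ‖g 0‖ ≤ 0 := Real.log_nonpos (norm_nonneg _) (hgb 0 h0mem)
    rw [hb_def, this]; linarith
  have hbabs : |b| ≤ L + 1/3 := by
    have h1 : Real.log δ ≤ Real.log ‖g 0‖ := by
      apply Real.log_le_log hδpos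
      rw [hg_def]
      exact hδmin w hwcb
    rw [abs_of_neg (by linarith : b < 0), hb_def, hre 0 h0mem, hL_def]
    have h2 := hδmin w hwcb
    linarith
  -- denominator nonvanishing
  have hden : ∀ x ∈ ball (0:ℂ) 1, H x + (b:ℂ) ≠ 0 := by
    intro x hx hcon
    have : (H x + (b:ℂ)).re = 0 := by rw [hcon]; simp
    rw [Complex.add_re, Complex.ofReal_re] at this
    have := hHreneg x hx
    linarith
  -- Möbius transform
  set Φ : ℂ → ℂ := fun x => (H x - (b:ℂ)) / (H x + (b:ℂ)) with hΦ_def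
  clear_value Φ
  have hΦd : DifferentiableOn ℂ Φ (ball (0:ℂ) 1) := by
    rw [hΦ_def]; exact (hHd.sub_const _).div (hHd.add_const _) hden
  have hΦmaps : ∀ x ∈ ball (0:ℂ) 1, ‖Φ x‖ < 1 := by
    intro x hx
    rw [hΦ_def]
    simp only [norm_div]
    rw [div_lt_one (norm_pos_iff.mpr (hden x hx))]
    have hlt : Complex.normSq (H x - (b:ℂ)) < Complex.normSq (H x + (b:ℂ)) := by
      simp only [Complex.normSq_apply, Complex.sub_re, Complex.sub_im, Complex.add_re,
        Complex.add_im, Complex.ofReal_re, Complex.ofReal_im]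
      have h1 := hHreneg x hx
      nlinarith [hbneg, hHreneg x hx]
    rw [Complex.norm_def, Complex.norm_def]
    exact Real.sqrt_lt_sqrt (Complex.normSq_nonneg _) hlt
  have hΦ0 : Φ 0 = 0 := by
    rw [hΦ_def]
    simp [hH0]
  -- Schwarz lemma
  have hschwarz : ‖Φ z‖ ≤ ‖z‖ := by
    apply Complex.norm_le_norm_of_mapsTo_ball hΦd
      (fun x hx => ball_subset_closedBall (mem_ball_zero_iff.mpr (hΦmaps x hx)))
      hΦ0
    simpa using hz
  have hzmem : z ∈ ball (0:ℂ) 1 := mem_ball_zero_iff.mpr hz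
  have hΦz : ‖Φ z‖ ≤ ‖z‖ := by simpa using hschwarz
  -- recover bound on H z
  have hHineq : ‖H z‖ * (1 - ‖z‖) ≤ |b| * (1 + ‖z‖) := by
    have hid : H z * (1 - Φ z) = (b:ℂ) * (1 + Φ z) := by
      rw [hΦ_def]
      field_simp [hden z hzmem]
      ring
    have h1 : ‖H z‖ * ‖1 - Φ z‖ = |b| * ‖1 + Φ z‖ := by
      have h1' := congrArg (fun t : ℂ => ‖t‖) hid
      simpa only [norm_mul, Complex.norm_real, Real.norm_eq_abs] using h1'
    have h2 : 1 - ‖z‖ ≤ ‖1 - Φ z‖ := by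
      have := norm_sub_norm_le (1:ℂ) (Φ z)
      simp only [norm_one] at this
      linarith [hΦz]
    have h3 : ‖1 + Φ z‖ ≤ 1 + ‖z‖ := by
      calc ‖1 + Φ z‖ ≤ ‖(1:ℂ)‖ + ‖Φ z‖ := norm_add_le _ _
        _ ≤ 1 + ‖z‖ := by rw [norm_one]; linarith [hΦz]
    calc ‖H z‖ * (1 - ‖z‖) ≤ ‖H z‖ * ‖1 - Φ z‖ := by
          apply mul_le_mul_of_nonneg_left h2 (norm_nonneg _)
      _ = |b| * ‖1 + Φ z‖ := h1
      _ ≤ |b| * (1 + ‖z‖) := mul_le_mul_of_nonneg_left h3 (abs_nonneg _)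
  -- final estimate
  have hs1 : 0 < 1 - ‖z‖ := by linarith
  have hHz : ‖H z‖ ≤ (2 * L + 1) / (1 - ‖z‖) := by
    rw [le_div_iff₀ hs1]
    calc ‖H z‖ * (1 - ‖z‖) ≤ |b| * (1 + ‖z‖) := hHineq
      _ ≤ (L + 1/3) * 2 := by
          apply mul_le_mul hbabs (by linarith) (by linarith [norm_nonneg z]) (by linarith)
      _ ≤ 2 * L + 1 := by linarith
  have hlog : -Real.log ‖g z‖ ≤ (2 * L + 1) / (1 - ‖z‖) := by
    have h1 : -(H z).re ≤ ‖H z‖ := by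
      calc -(H z).re ≤ |(H z).re| := neg_le_abs _
        _ ≤ ‖H z‖ := by exact Complex.abs_re_le_norm _
    have h2 := hHre z hzmem
    have h3 : -Real.log ‖g z‖ = -(H z).re - 1/3 := by rw [h2]; ring
    linarith
  have hgpos : 0 < ‖g z‖ := norm_pos_iff.mpr (hgne z hzmem)
  calc 1 / ‖f (z, w)‖ = Real.exp (Real.log (1 / ‖g z‖)) := by
        rw [Real.exp_log (by positivity), hg_def]
    _ ≤ Real.exp ((2 * L + 1) / (1 - ‖z‖)) := by
        apply Real.exp_le_exp.mpr
        rw [one_div, Real.log_inv]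
        exact hlog
end

section
/- Let u(z,w) = (1−z)(1−w)/((1−z)^{1/2}+(1−w)^{1/2})² for z, w in the open unit disc D, where the square roots are principal. Then there exist constants c₁, c₂ > 0 such that for all (z,w) ∈ D², c₁ · min(|1−z|, |1−w|) ≤ |u(z,w)| ≤ c₂ · min(|1−z|, |1−w|). -/
open Metric Complex

lemma sqrtA {c : ℂ} (hc : 0 < c.re) :
    Real.sqrt 2 / 2 * ‖c ^ ((1:ℂ)/2)‖ ≤ (c ^ ((1:ℂ)/2)).re := by
  have hc0 : c ≠ 0 := fun h => by simp [h] at hc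
  rw [cpow_def_of_ne_zero hc0]
  rw [Complex.exp_re, Complex.norm_exp]
  have him : (Complex.log c * ((1:ℂ)/2)).im = arg c / 2 := by
    simp [Complex.log_im, mul_comm]
    ring
  rw [him]
  have harg : |arg c| < Real.pi / 2 :=
    Complex.abs_arg_lt_pi_div_two_iff.2 (Or.inl hc)
  have h1 : Real.cos (Real.pi/4) ≤ Real.cos (arg c / 2) := by
    rw [← Real.cos_abs (arg c / 2)]
    apply Real.cos_le_cos_of_nonneg_of_le_pi (abs_nonneg _)
    · linarith [Real.pi_pos]
    · rw [abs_div]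
      simp
      linarith [harg]
  rw [Real.cos_pi_div_four] at h1
  have := Real.exp_pos (Complex.log c * ((1:ℂ)/2)).re
  nlinarith

lemma sqrtB {c : ℂ} (hc0 : c ≠ 0) :
    ‖c ^ ((1:ℂ)/2)‖ ^ 2 = ‖c‖ := by
  rw [Complex.norm_cpow_of_ne_zero hc0]
  simp
  rw [← Real.rpow_natCast _ 2, ← Real.rpow_mul (norm_nonneg c)]
  norm_num

noncomputable def u (z w : ℂ) : ℂ :=
  ((1 - z) * (1 - w)) / ((1 - z) ^ ((1:ℂ)/2) + (1 - w) ^ ((1:ℂ)/2)) ^ 2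

/-- `|u(z,w)| ≍ min(|1-z|, |1-w|)` on the bidisc. -/
theorem stmt_2 : ∃ c₁ : ℝ, 0 < c₁ ∧ ∃ c₂ : ℝ, 0 < c₂ ∧
    ∀ z ∈ ball (0:ℂ) 1, ∀ w ∈ ball (0:ℂ) 1,
      c₁ * min ‖1 - z‖ ‖1 - w‖ ≤ ‖u z w‖ ∧ ‖u z w‖ ≤ c₂ * min ‖1 - z‖ ‖1 - w‖ := by
  refine ⟨1/4, by norm_num, 2, by norm_num, fun z hz w hw => ?_⟩
  have hz1 : 0 < (1 - z).re := by
    have h : ‖z‖ < 1 := by simpa using hz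
    have h2 : z.re < 1 := lt_of_le_of_lt (le_trans (le_abs_self _) (Complex.abs_re_le_norm z)) h
    simp only [Complex.sub_re, Complex.one_re]; linarith
  have hw1 : 0 < (1 - w).re := by
    have h : ‖w‖ < 1 := by simpa using hw
    have h2 : w.re < 1 := lt_of_le_of_lt (le_trans (le_abs_self _) (Complex.abs_re_le_norm w)) h
    simp only [Complex.sub_re, Complex.one_re]; linarith
  have hz0 : (1 - z) ≠ 0 := fun h => by simp [h] at hz1
  have hw0 : (1 - w) ≠ 0 := fun h => by simp [h] at hw1
  set a := (1 - z) ^ ((1:ℂ)/2) with ha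
  set b := (1 - w) ^ ((1:ℂ)/2) with hb
  set k : ℝ := Real.sqrt 2 / 2 with hk
  have hk0 : 0 < k := by positivity
  have hk2 : k^2 = 1/2 := by
    rw [hk, div_pow, Real.sq_sqrt (by norm_num : (0:ℝ) ≤ 2)]; norm_num
  have hA := sqrtA hz1
  have hB := sqrtA hw1
  have hA2 : ‖a‖ ^ 2 = ‖1 - z‖ := sqrtB hz0
  have hB2 : ‖b‖ ^ 2 = ‖1 - w‖ := sqrtB hw0
  have haa : 0 < ‖a‖ := by
    rcases (norm_nonneg a).lt_or_eq with h | h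
    · exact h
    · exfalso; apply hz0; rw [← norm_eq_zero, ← hA2, ← h]; ring
  have hbb : 0 < ‖b‖ := by
    rcases (norm_nonneg b).lt_or_eq with h | h
    · exact h
    · exfalso; apply hw0; rw [← norm_eq_zero, ← hB2, ← h]; ring
  have hub : ‖a + b‖ ≤ ‖a‖ + ‖b‖ := norm_add_le a b
  have hlb : k * (‖a‖ + ‖b‖) ≤ ‖a + b‖ := by
    have h1 : k * (‖a‖ + ‖b‖) ≤ (a + b).re := by
      rw [Complex.add_re, mul_add]; exact add_le_add hA hB
    exact le_trans h1 (Complex.re_le_norm _)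
  have hab0 : 0 < ‖a + b‖ := lt_of_lt_of_le (by positivity) hlb
  have hnu : ‖u z w‖ = ‖a‖^2 * ‖b‖^2 / ‖a+b‖^2 := by
    simp only [u, norm_div, norm_mul, norm_pow]
    rw [hA2, hB2]
  have hmin : min ‖1 - z‖ ‖1 - w‖ = (min ‖a‖ ‖b‖)^2 := by
    simp only [← hA2, ← hB2]
    rcases le_total ‖a‖ ‖b‖ with h | h
    · rw [min_eq_left h, min_eq_left (by nlinarith)]
    · rw [min_eq_right h, min_eq_right (by nlinarith)]
  rw [hnu, hmin]
  set A := ‖a‖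
  set B := ‖b‖
  set S := ‖a + b‖
  clear_value A B S
  clear hA hB hA2 hB2 hnu hmin hz hw hz1 hw1 hz0 hw0 ha hb
  have hSu2 : S^2 ≤ (A + B)^2 := by nlinarith
  have hSl2 : (A + B)^2 ≤ 2 * S^2 := by
    have h2 : (k*(A+B)) * (k*(A+B)) ≤ S * S :=
      mul_self_le_mul_self (by positivity) hlb
    nlinarith
  rcases le_total A B with h | h
  · rw [min_eq_left h]
    constructor
    · rw [le_div_iff₀ (by positivity : (0:ℝ) < S^2)]
      have hS4 : S^2 ≤ 4 * B^2 := by nlinarith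
      nlinarith [mul_le_mul_of_nonneg_left hS4 (sq_nonneg A)]
    · rw [div_le_iff₀ (by positivity : (0:ℝ) < S^2)]
      have hBle : B^2 ≤ 2 * S^2 := by nlinarith
      nlinarith [mul_le_mul_of_nonneg_left hBle (sq_nonneg A)]
  · rw [min_eq_right h]
    constructor
    · rw [le_div_iff₀ (by positivity : (0:ℝ) < S^2)]
      have hS4 : S^2 ≤ 4 * A^2 := by nlinarith
      nlinarith [mul_le_mul_of_nonneg_left hS4 (sq_nonneg B)]
    · rw [div_le_iff₀ (by positivity : (0:ℝ) < S^2)]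
      have hAle : A^2 ≤ 2 * S^2 := by nlinarith
      nlinarith [mul_le_mul_of_nonneg_left hAle (sq_nonneg B)]
end

section
/- Let u(z,w) = (1−z)(1−w)/((1−z)^{1/2}+(1−w)^{1/2})² for z, w in the open unit disc D (principal square roots). Then for all (z,w) ∈ D², |1 − u(z,w)| ≤ 1; equivalently Re(u(z,w)) ≥ |u(z,w)|²/2. -/
open Metric Complex

open Real in
/-- For `a` with positive real part, the principal square root satisfies `|Im| < Re`. -/
lemma sqrt_half_plane {a : ℂ} (ha : 0 < a.re) :
    |(a ^ ((1:ℂ)/2)).im| < (a ^ ((1:ℂ)/2)).re := by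
  have ha0 : a ≠ 0 := by
    intro h; rw [h] at ha; simp at ha
  have harg : |Complex.arg a| < π / 2 :=
    Complex.abs_arg_lt_pi_div_two_iff.2 (Or.inl ha)
  rw [Complex.cpow_def_of_ne_zero ha0]
  have hre : (Complex.log a * ((1:ℂ)/2)).re = (Complex.log a).re / 2 := by
    simp [Complex.mul_re, Complex.div_im, Complex.div_re]; ring
  have him : (Complex.log a * ((1:ℂ)/2)).im = Complex.arg a / 2 := by
    simp [Complex.mul_im, Complex.div_im, Complex.div_re, Complex.log_im]; ring
  rw [Complex.exp_re, Complex.exp_im, hre, him, abs_mul,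
    abs_of_pos (Real.exp_pos _)]
  have hE : (0:ℝ) < Real.exp ((Complex.log a).re / 2) := Real.exp_pos _
  have key : |Real.sin (Complex.arg a / 2)| < Real.cos (Complex.arg a / 2) := by
    set x := Complex.arg a / 2 with hx
    have hx4 : |x| < π / 4 := by
      rw [hx, abs_div, abs_of_pos (by norm_num : (0:ℝ) < 2)]
      linarith [harg]
    have h1 : |Real.sin x| = Real.sin |x| := by
      rcases le_or_gt 0 x with h | h
      · rw [_root_.abs_of_nonneg h, _root_.abs_of_nonneg
          (Real.sin_nonneg_of_nonneg_of_le_pi h (by nlinarith [Real.pi_pos, abs_lt.1 hx4]))]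
      · rw [abs_of_neg h, _root_.abs_of_neg
          (Real.sin_neg_of_neg_of_neg_pi_lt h (by nlinarith [Real.pi_pos, abs_lt.1 hx4])),
          Real.sin_neg]
    have h2 : Real.cos x = Real.cos |x| := (Real.cos_abs x).symm
    rw [h1, h2]
    have hs : Real.sin |x| < Real.sin (π/4) :=
      Real.sin_lt_sin_of_lt_of_le_pi_div_two (by linarith [abs_nonneg x, Real.pi_pos])
        (by linarith [Real.pi_pos]) hx4
    have hc : Real.cos (π/4) ≤ Real.cos |x| :=
      Real.cos_le_cos_of_nonneg_of_le_pi (abs_nonneg x) (by linarith [Real.pi_pos]) (le_of_lt hx4)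
    rw [Real.sin_pi_div_four, Real.cos_pi_div_four] at *
    linarith
  calc Real.exp ((Complex.log a).re / 2) * |Real.sin (Complex.arg a / 2)|
      < Real.exp ((Complex.log a).re / 2) * Real.cos (Complex.arg a / 2) := by
        exact (mul_lt_mul_iff_right₀ hE).2 key
    _ = _ := by ring

/-- The image of `u` lies in `{ζ : |1-ζ| ≤ 1} = {ζ : Re ζ ≥ |ζ|²/2}`. -/
theorem stmt_4 : ∀ z ∈ ball (0:ℂ) 1, ∀ w ∈ ball (0:ℂ) 1,
    ‖1 - u z w‖ ≤ 1 ∧ ‖u z w‖ ^ 2 / 2 ≤ (u z w).re := by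
  intro z hz w hw
  rw [mem_ball, dist_eq_norm, sub_zero] at hz hw
  set a : ℂ := 1 - z with haz
  set b : ℂ := 1 - w with hbw
  -- basic facts about a, b
  have hka : Complex.normSq a < 2 * a.re := by
    have : Complex.normSq (a - 1) < 1 := by
      have : ‖a - 1‖ < 1 := by
        simpa [haz, norm_sub_rev] using hz
      calc Complex.normSq (a-1) = ‖a-1‖^2 := (Complex.sq_norm _).symm
        _ < 1 := by nlinarith [norm_nonneg (a-1)]
    simp [Complex.normSq_apply, Complex.sub_re, Complex.sub_im] at this ⊢
    nlinarith
  have hkb : Complex.normSq b < 2 * b.re := by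
    have : Complex.normSq (b - 1) < 1 := by
      have : ‖b - 1‖ < 1 := by
        simpa [hbw, norm_sub_rev] using hw
      calc Complex.normSq (b-1) = ‖b-1‖^2 := (Complex.sq_norm _).symm
        _ < 1 := by nlinarith [norm_nonneg (b-1)]
    simp [Complex.normSq_apply, Complex.sub_re, Complex.sub_im] at this ⊢
    nlinarith
  have hare : 0 < a.re := by nlinarith [Complex.normSq_nonneg a]
  have hbre : 0 < b.re := by nlinarith [Complex.normSq_nonneg b]
  have ha0 : a ≠ 0 := fun h => by rw [h] at hare; simp at hare
  have hb0 : b ≠ 0 := fun h => by rw [h] at hbre; simp at hbre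
  have hna : 0 < Complex.normSq a := Complex.normSq_pos.2 ha0
  have hnb : 0 < Complex.normSq b := Complex.normSq_pos.2 hb0
  set s : ℂ := a ^ ((1:ℂ)/2) with hs
  set t : ℂ := b ^ ((1:ℂ)/2) with ht
  have hsab : |s.im| < s.re := sqrt_half_plane hare
  have htab : |t.im| < t.re := sqrt_half_plane hbre
  have hsre : 0 < s.re := lt_of_le_of_lt (abs_nonneg _) hsab
  have htre : 0 < t.re := lt_of_le_of_lt (abs_nonneg _) htab
  have hs2 : s ^ 2 = a := by
    rw [hs]
    have : (1:ℂ)/2 = ((2:ℕ):ℂ)⁻¹ := by norm_num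
    rw [this, Complex.cpow_nat_inv_pow a (by norm_num)]
  have ht2 : t ^ 2 = b := by
    rw [ht]
    have : (1:ℂ)/2 = ((2:ℕ):ℂ)⁻¹ := by norm_num
    rw [this, Complex.cpow_nat_inv_pow b (by norm_num)]
  have hs0 : s ≠ 0 := fun h => by rw [h] at hsre; simp at hsre
  have ht0 : t ≠ 0 := fun h => by rw [h] at htre; simp at htre
  have hst0 : s + t ≠ 0 := fun h => by
    have : (s+t).re = 0 := by rw [h]; simp
    rw [Complex.add_re] at this; linarith
  -- Re(s*t) > 0
  have hstre : 0 < (s * t).re := by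
    rw [Complex.mul_re]
    have h1 : s.im * t.im ≤ |s.im| * |t.im| := by
      calc s.im * t.im ≤ |s.im * t.im| := le_abs_self _
        _ = |s.im| * |t.im| := abs_mul _ _
    have h2 : |s.im| * |t.im| < s.re * t.re :=
      mul_lt_mul'' hsab htab (abs_nonneg _) (abs_nonneg _)
    linarith
  -- u z w in terms of s, t
  have huval : u z w = s^2 * t^2 / (s + t)^2 := by
    rw [u, ← haz, ← hbw, ← hs, ← ht, hs2, ht2]
  have hu0 : u z w ≠ 0 := by
    rw [huval]
    exact div_ne_zero (mul_ne_zero (pow_ne_zero 2 hs0) (pow_ne_zero 2 ht0)) (pow_ne_zero 2 hst0)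
  -- 1/u = 1/s² + 1/t² + 2/(s t)
  have hinv : (u z w)⁻¹ = (s^2)⁻¹ + (t^2)⁻¹ + 2 * (s*t)⁻¹ := by
    rw [huval]
    field_simp
    ring
  -- Re(1/u) ≥ 1
  have h1a : (1:ℝ)/2 < ((s^2)⁻¹).re := by
    rw [hs2, Complex.inv_re]
    rw [div_eq_mul_inv, ← div_eq_mul_inv]
    rw [lt_div_iff₀ hna]
    linarith
  have h1b : (1:ℝ)/2 < ((t^2)⁻¹).re := by
    rw [ht2, Complex.inv_re]
    rw [div_eq_mul_inv, ← div_eq_mul_inv]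
    rw [lt_div_iff₀ hnb]
    linarith
  have h1c : 0 ≤ ((s*t)⁻¹).re := by
    rw [Complex.inv_re]
    exact div_nonneg (le_of_lt hstre) (Complex.normSq_nonneg _)
  have hinvre : 1 ≤ ((u z w)⁻¹).re := by
    rw [hinv, Complex.add_re, Complex.add_re]
    have : ((2:ℂ) * (s*t)⁻¹).re = 2 * ((s*t)⁻¹).re := by
      rw [Complex.mul_re]; simp
    rw [this]
    linarith
  -- conclude
  have hnu : 0 < Complex.normSq (u z w) := Complex.normSq_pos.2 hu0
  have hure : Complex.normSq (u z w) ≤ (u z w).re := by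
    rw [Complex.inv_re] at hinvre
    rw [le_div_iff₀ hnu] at hinvre
    linarith
  have hnorm : ‖u z w‖^2 = Complex.normSq (u z w) := Complex.sq_norm _
  constructor
  · have h1 : ‖1 - u z w‖^2 ≤ 1 := by
      have heq : Complex.normSq (1 - u z w)
          = 1 - 2*(u z w).re + Complex.normSq (u z w) := by
        simp only [Complex.normSq_apply, Complex.sub_re, Complex.sub_im, Complex.one_re,
          Complex.one_im]
        ring
      have : Complex.normSq (1 - u z w) ≤ 1 := by rw [heq]; linarith
      calc ‖1 - u z w‖^2 = Complex.normSq (1 - u z w) := Complex.sq_norm _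
        _ ≤ 1 := this
    nlinarith [norm_nonneg (1 - u z w)]
  · rw [hnorm]; linarith
end

section
/- Let α, β > 0 and let f(z,w) = Σ_{n,m∈ℤ} a_{n,m} z^n w^m be a function on the torus T² with Σ |a_{n,m}|(1+|n|)^α(1+|m|)^β ≤ 1. For 0 < ρ < 1 define f_ρ(z,w) = Σ a_{n,m} ρ^{|n|+|m|} z^n w^m. Then for all z, w on the unit circle T, |f(z,w) − f_ρ(z,w)| ≤ 2(1−ρ)^γ, where γ = min(1, α, β). -/
private lemma aux_geom (ρ : ℝ) (hρ0 : 0 ≤ ρ) (hρ1 : ρ ≤ 1) (k : ℕ) :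
    1 - ρ ^ k ≤ k * (1 - ρ) := by
  induction k with
  | zero => simp
  | succ n ih =>
    have hp : ρ ^ n ≤ 1 := pow_le_one₀ hρ0 hρ1
    have hps : ρ ^ (n+1) = ρ ^ n * ρ := pow_succ ρ n
    push_cast
    nlinarith [pow_nonneg hρ0 n]

private lemma aux_key (ρ γ : ℝ) (hρ0 : 0 ≤ ρ) (hρ1 : ρ ≤ 1)
    (hγ0 : 0 ≤ γ) (hγ1 : γ ≤ 1) (k : ℕ) :
    1 - ρ ^ k ≤ ((k : ℝ) * (1 - ρ)) ^ γ := by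
  have h1 := aux_geom ρ hρ0 hρ1 k
  set x := (k : ℝ) * (1 - ρ) with hx
  have hx0 : 0 ≤ x := mul_nonneg (Nat.cast_nonneg k) (by linarith)
  rcases le_or_gt 1 x with h | h
  · have h2 : (1:ℝ) ≤ x ^ γ := Real.one_le_rpow h hγ0
    have hpk : 0 ≤ ρ ^ k := pow_nonneg hρ0 k
    linarith
  · rcases eq_or_lt_of_le hx0 with h0 | h0
    · have h2 : 1 - ρ ^ k ≤ 0 := by rw [← h0] at h1; linarith
      exact h2.trans (Real.rpow_nonneg hx0 γ)
    · calc 1 - ρ ^ k ≤ x := h1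
        _ = x ^ (1:ℝ) := (Real.rpow_one x).symm
        _ ≤ x ^ γ := Real.rpow_le_rpow_of_exponent_ge h0 h.le hγ1

private lemma aux_point (α β γ : ℝ) (hα : 0 < α) (hβ : 0 < β)
    (hγ0 : 0 < γ) (hγ1 : γ ≤ 1) (hγα : γ ≤ α) (hγβ : γ ≤ β)
    (ρ : ℝ) (hρ0 : 0 < ρ) (hρ1 : ρ < 1) (n m : ℤ) :
    1 - ρ ^ (|n| + |m|).toNat ≤
      2 * (1 - ρ) ^ γ * ((1 + |n| : ℝ) ^ α * (1 + |m| : ℝ) ^ β) := by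
  set k : ℕ := (|n| + |m|).toNat with hk
  have hb1 : (1:ℝ) ≤ (1 + |n| : ℝ) := le_add_of_nonneg_right (by positivity)
  have hb2 : (1:ℝ) ≤ (1 + |m| : ℝ) := le_add_of_nonneg_right (by positivity)
  have hkle : (k : ℝ) ≤ (1 + |n| : ℝ) * (1 + |m| : ℝ) := by
    have hnn : (0:ℤ) ≤ |n| + |m| := add_nonneg (abs_nonneg n) (abs_nonneg m)
    have hkc : (k : ℝ) = (|n| : ℝ) + (|m| : ℝ) := by
      rw [hk]
      have h2 : (((|n| + |m|).toNat : ℤ) : ℝ) = ((|n| : ℤ) : ℝ) + ((|m| : ℤ) : ℝ) := by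
        rw [Int.toNat_of_nonneg hnn]; push_cast; ring
      exact_mod_cast h2
    have h1 : (0:ℝ) ≤ (|n| : ℝ) := by positivity
    have h2 : (0:ℝ) ≤ (|m| : ℝ) := by positivity
    rw [hkc]; push_cast; nlinarith
  have key := aux_key ρ γ hρ0.le hρ1.le hγ0.le hγ1 k
  have h1ρ : (0:ℝ) ≤ 1 - ρ := by linarith
  have hmul : ((k : ℝ) * (1 - ρ)) ^ γ = (k : ℝ) ^ γ * (1 - ρ) ^ γ :=
    Real.mul_rpow (Nat.cast_nonneg k) h1ρ
  have hkγ : (k : ℝ) ^ γ ≤ (1 + |n| : ℝ) ^ α * (1 + |m| : ℝ) ^ β := by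
    calc (k : ℝ) ^ γ ≤ ((1 + |n| : ℝ) * (1 + |m| : ℝ)) ^ γ :=
          Real.rpow_le_rpow (Nat.cast_nonneg k) hkle hγ0.le
      _ = (1 + |n| : ℝ) ^ γ * (1 + |m| : ℝ) ^ γ :=
          Real.mul_rpow (by linarith) (by linarith)
      _ ≤ (1 + |n| : ℝ) ^ α * (1 + |m| : ℝ) ^ β := by
          apply mul_le_mul
          · exact Real.rpow_le_rpow_of_exponent_le hb1 hγα
          · exact Real.rpow_le_rpow_of_exponent_le hb2 hγβ
          · positivity
          · positivity
  have h2 : (0:ℝ) ≤ (1 - ρ) ^ γ := Real.rpow_nonneg h1ρ γ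
  calc 1 - ρ ^ k ≤ (k : ℝ) ^ γ * (1 - ρ) ^ γ := by rw [← hmul]; exact key
    _ ≤ ((1 + |n| : ℝ) ^ α * (1 + |m| : ℝ) ^ β) * (1 - ρ) ^ γ :=
        mul_le_mul_of_nonneg_right hkγ h2
    _ ≤ 2 * (1 - ρ) ^ γ * ((1 + |n| : ℝ) ^ α * (1 + |m| : ℝ) ^ β) := by
        have hpos : (0:ℝ) ≤ (1 + |n| : ℝ) ^ α * (1 + |m| : ℝ) ^ β := by positivity
        nlinarith


/-- Approximation of a Beurling-algebra function on the 2-torus by its Abel means: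
`|f(z,w) - f_ρ(z,w)| ≤ 2 (1-ρ)^γ` with `γ = min(1, α, β)`. -/
theorem stmt_6 (α β : ℝ) (hα : 0 < α) (hβ : 0 < β) (a : ℤ × ℤ → ℂ)
    (hsum : Summable (fun p : ℤ × ℤ =>
      ‖a p‖ * (1 + |p.1| : ℝ) ^ α * (1 + |p.2| : ℝ) ^ β))
    (hnorm : ∑' p : ℤ × ℤ,
      ‖a p‖ * (1 + |p.1| : ℝ) ^ α * (1 + |p.2| : ℝ) ^ β ≤ 1)
    (ρ : ℝ) (hρ0 : 0 < ρ) (hρ1 : ρ < 1) :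
    ∀ z w : ℂ, ‖z‖ = 1 → ‖w‖ = 1 →
      ‖(∑' p : ℤ × ℤ, a p * z ^ p.1 * w ^ p.2) -
        ∑' p : ℤ × ℤ, a p * (ρ : ℂ) ^ (|p.1| + |p.2|) * z ^ p.1 * w ^ p.2‖ ≤
        2 * (1 - ρ) ^ (min 1 (min α β)) := by
  intro z w hz hw
  set γ := min 1 (min α β) with hγdef
  have hγ0 : 0 < γ := lt_min one_pos (lt_min hα hβ)
  have hγ1 : γ ≤ 1 := min_le_left _ _
  have hγα : γ ≤ α := le_trans (min_le_right _ _) (min_le_left _ _)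
  have hγβ : γ ≤ β := le_trans (min_le_right _ _) (min_le_right _ _)
  set W : ℤ × ℤ → ℝ := fun p => ‖a p‖ * (1 + |p.1| : ℝ) ^ α * (1 + |p.2| : ℝ) ^ β with hW
  have hb1 : ∀ n : ℤ, (1:ℝ) ≤ (1 + |n| : ℝ) := fun n =>
    le_add_of_nonneg_right (by positivity)
  have hWge : ∀ p : ℤ × ℤ, ‖a p‖ ≤ W p := by
    intro p
    have h1 : (1:ℝ) ≤ (1 + |p.1| : ℝ) ^ α := Real.one_le_rpow (hb1 p.1) hα.le
    have h2 : (1:ℝ) ≤ (1 + |p.2| : ℝ) ^ β := Real.one_le_rpow (hb1 p.2) hβ.le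
    have := norm_nonneg (a p)
    calc ‖a p‖ = ‖a p‖ * 1 * 1 := by ring
      _ ≤ W p := by
          apply mul_le_mul (mul_le_mul_of_nonneg_left h1 this) h2 zero_le_one
          positivity
  -- norms of z,w powers
  have hzn : ∀ n : ℤ, ‖z ^ n‖ = 1 := fun n => by rw [norm_zpow, hz, one_zpow]
  have hwn : ∀ n : ℤ, ‖w ^ n‖ = 1 := fun n => by rw [norm_zpow, hw, one_zpow]
  have hρcast : ∀ n m : ℤ,
      (ρ : ℂ) ^ (|n| + |m|) = ((ρ ^ (|n| + |m|).toNat : ℝ) : ℂ) := by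
    intro n m
    rw [← Int.toNat_of_nonneg (show (0:ℤ) ≤ |n| + |m| by positivity), zpow_natCast]
    push_cast
    rfl
  have hρk1 : ∀ k : ℕ, ρ ^ k ≤ 1 := fun k => pow_le_one₀ hρ0.le hρ1.le
  have hρk0 : ∀ k : ℕ, 0 ≤ ρ ^ k := fun k => pow_nonneg hρ0.le k
  -- pointwise norm identities
  have hnf : ∀ p : ℤ × ℤ, ‖a p * z ^ p.1 * w ^ p.2‖ = ‖a p‖ := by
    intro p; rw [norm_mul, norm_mul, hzn, hwn]; ring
  have hng : ∀ p : ℤ × ℤ,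
      ‖a p * (ρ : ℂ) ^ (|p.1| + |p.2|) * z ^ p.1 * w ^ p.2‖
        = ‖a p‖ * ρ ^ (|p.1| + |p.2|).toNat := by
    intro p
    rw [norm_mul, norm_mul, norm_mul, hzn, hwn, hρcast p.1 p.2,
      Complex.norm_real, Real.norm_of_nonneg (hρk0 _)]
    ring
  have hf : Summable (fun p : ℤ × ℤ => a p * z ^ p.1 * w ^ p.2) := by
    apply Summable.of_norm_bounded hsum
    intro p; rw [hnf p]; exact hWge p
  have hg : Summable (fun p : ℤ × ℤ =>
      a p * (ρ : ℂ) ^ (|p.1| + |p.2|) * z ^ p.1 * w ^ p.2) := by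
    apply Summable.of_norm_bounded hsum
    intro p
    rw [hng p]
    calc ‖a p‖ * ρ ^ (|p.1| + |p.2|).toNat ≤ ‖a p‖ * 1 :=
        mul_le_mul_of_nonneg_left (hρk1 _) (norm_nonneg _)
      _ = ‖a p‖ := mul_one _
      _ ≤ W p := hWge p
  -- key pointwise bound on the difference
  have key : ∀ p : ℤ × ℤ,
      ‖a p * z ^ p.1 * w ^ p.2 - a p * (ρ : ℂ) ^ (|p.1| + |p.2|) * z ^ p.1 * w ^ p.2‖
        ≤ 2 * (1 - ρ) ^ γ * W p := by
    intro p
    have heq : a p * z ^ p.1 * w ^ p.2 - a p * (ρ : ℂ) ^ (|p.1| + |p.2|) * z ^ p.1 * w ^ p.2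
        = (a p * (1 - ((ρ ^ (|p.1| + |p.2|).toNat : ℝ) : ℂ))) * (z ^ p.1 * w ^ p.2) := by
      rw [hρcast p.1 p.2]; ring
    rw [heq, norm_mul, norm_mul, norm_mul, hzn, hwn]
    have hnr : ‖(1 : ℂ) - ((ρ ^ (|p.1| + |p.2|).toNat : ℝ) : ℂ)‖
        = 1 - ρ ^ (|p.1| + |p.2|).toNat := by
      rw [show (1 : ℂ) - ((ρ ^ (|p.1| + |p.2|).toNat : ℝ) : ℂ)
          = ((1 - ρ ^ (|p.1| + |p.2|).toNat : ℝ) : ℂ) by push_cast; ring,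
        Complex.norm_real, Real.norm_of_nonneg (by linarith [hρk1 (|p.1| + |p.2|).toNat])]
    rw [hnr]
    have hpt := aux_point α β γ hα hβ hγ0 hγ1 hγα hγβ ρ hρ0 hρ1 p.1 p.2
    have hWp : W p = ‖a p‖ * ((1 + |p.1| : ℝ) ^ α * (1 + |p.2| : ℝ) ^ β) := by
      rw [hW]; ring
    calc ‖a p‖ * (1 - ρ ^ (|p.1| + |p.2|).toNat) * (1 * 1)
        = ‖a p‖ * (1 - ρ ^ (|p.1| + |p.2|).toNat) := by ring
      _ ≤ ‖a p‖ * (2 * (1 - ρ) ^ γ * ((1 + |p.1| : ℝ) ^ α * (1 + |p.2| : ℝ) ^ β)) :=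
          mul_le_mul_of_nonneg_left hpt (norm_nonneg _)
      _ = 2 * (1 - ρ) ^ γ * W p := by rw [hWp]; ring
  -- summability of the bound and the normed difference
  have hbnd : Summable (fun p : ℤ × ℤ => 2 * (1 - ρ) ^ γ * W p) := hsum.mul_left _
  have hdiffnorm : Summable (fun p : ℤ × ℤ =>
      ‖a p * z ^ p.1 * w ^ p.2 - a p * (ρ : ℂ) ^ (|p.1| + |p.2|) * z ^ p.1 * w ^ p.2‖) :=
    Summable.of_nonneg_of_le (fun p => norm_nonneg _) key hbnd
  rw [← hf.tsum_sub hg]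
  have h1ρ : (0:ℝ) ≤ (1 - ρ) ^ γ := Real.rpow_nonneg (by linarith) γ
  calc ‖∑' p : ℤ × ℤ, (a p * z ^ p.1 * w ^ p.2
          - a p * (ρ : ℂ) ^ (|p.1| + |p.2|) * z ^ p.1 * w ^ p.2)‖
      ≤ ∑' p : ℤ × ℤ, ‖a p * z ^ p.1 * w ^ p.2
          - a p * (ρ : ℂ) ^ (|p.1| + |p.2|) * z ^ p.1 * w ^ p.2‖ :=
        norm_tsum_le_tsum_norm hdiffnorm
    _ ≤ ∑' p : ℤ × ℤ, 2 * (1 - ρ) ^ γ * W p := Summable.tsum_le_tsum key hdiffnorm hbnd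
    _ = 2 * (1 - ρ) ^ γ * ∑' p : ℤ × ℤ, W p := tsum_mul_left
    _ ≤ 2 * (1 - ρ) ^ γ * 1 := by
        apply mul_le_mul_of_nonneg_left hnorm
        positivity
    _ = 2 * (1 - ρ) ^ γ := mul_one _
end

section
/- Let a : ℤ × ℤ → ℂ with Σ_{n,m} |a_{n,m}| < ∞ and sup bound S := sup_{n,m} (1−ρ^{|n|+|m|})/((1+|n|)^α(1+|m|)^β) where α, β > 0 and 0 < ρ < 1. Let g(z,w) = Σ a_{n,m}(1−ρ^{|n|+|m|}) z^n w^m on T² and suppose ‖Σ a_{n,m} z^n w^m‖_{α,β} ≤ 1. Then for every integer p ≥ 2, ‖g^p‖_{α,β} ≤ p^{α+β} S^{p−2}. -/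
open scoped ENNReal

/-- Convolution of coefficient functions on `ℤ × ℤ`. -/
noncomputable def conv (c d : ℤ × ℤ → ℂ) : ℤ × ℤ → ℂ :=
  fun p => ∑' q : ℤ × ℤ, c q * d (p - q)

namespace Stmt8Aux

noncomputable def Econv (c d : ℤ × ℤ → ℝ≥0∞) : ℤ × ℤ → ℝ≥0∞ :=
  fun p => ∑' q : ℤ × ℤ, c q * d (p - q)

lemma coe_nnnorm_tsum_le (f : ℤ × ℤ → ℂ) :
    (‖∑' x, f x‖₊ : ℝ≥0∞) ≤ ∑' x, (‖f x‖₊ : ℝ≥0∞) := by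
  by_cases hs : Summable fun x => ‖f x‖₊
  · rw [← ENNReal.coe_tsum hs]
    exact_mod_cast nnnorm_tsum_le hs
  · have : (∑' x, (‖f x‖₊ : ℝ≥0∞)) = ⊤ := by
      by_contra h
      exact hs (ENNReal.tsum_coe_ne_top_iff_summable.1 h)
    rw [this]; exact le_top

lemma enorm_conv_iter_le (b : ℤ × ℤ → ℂ) (k : ℕ) (q : ℤ × ℤ) :
    (‖(conv b)^[k] b q‖₊ : ℝ≥0∞) ≤
      (Econv fun r => (‖b r‖₊ : ℝ≥0∞))^[k] (fun r => (‖b r‖₊ : ℝ≥0∞)) q := by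
  induction k generalizing q with
  | zero => simp
  | succ k ih =>
    rw [Function.iterate_succ_apply', Function.iterate_succ_apply']
    calc (‖conv b ((conv b)^[k] b) q‖₊ : ℝ≥0∞)
        ≤ ∑' r, (‖b r * (conv b)^[k] b (q - r)‖₊ : ℝ≥0∞) := coe_nnnorm_tsum_le _
      _ ≤ _ := by
          refine ENNReal.tsum_le_tsum fun r => ?_
          rw [nnnorm_mul, ENNReal.coe_mul]
          exact mul_le_mul_right (ih _) _

lemma econv_iter_eq (B : ℤ × ℤ → ℝ≥0∞) (k : ℕ) (q : ℤ × ℤ) :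
    (Econv B)^[k] B q
      = ∑' f : Fin k → ℤ × ℤ, (∏ i, B (f i)) * B (q - ∑ i, f i) := by
  induction k generalizing q with
  | zero =>
    rw [Function.iterate_zero_apply]
    symm
    rw [tsum_eq_single (fun _ => (0 : ℤ × ℤ)) (by
      intro f hf; exact absurd (Subsingleton.elim f _) hf)]
    simp
  | succ k ih =>
    rw [Function.iterate_succ_apply']
    have h1 : Econv B ((Econv B)^[k] B) q
        = ∑' r, ∑' f : Fin k → ℤ × ℤ,
            B r * ((∏ i, B (f i)) * B (q - r - ∑ i, f i)) := by
      show (∑' r, B r * ((Econv B)^[k] B (q - r))) = _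
      refine tsum_congr fun r => ?_
      rw [ih, ENNReal.tsum_mul_left]
    rw [h1, ← ENNReal.tsum_prod,
      ← Equiv.tsum_eq (Fin.consEquiv fun _ => ℤ × ℤ)
        (fun g : Fin (k + 1) → ℤ × ℤ => (∏ i, B (g i)) * B (q - ∑ i, g i))]
    refine tsum_congr fun P => ?_
    simp [Fin.consEquiv, Fin.prod_univ_succ, Fin.sum_univ_succ, sub_sub, mul_assoc]

lemma sum_weighted (B W : ℤ × ℤ → ℝ≥0∞) (k : ℕ) :
    ∑' q, (Econv B)^[k] B q * W q
      = ∑' g : Fin (k + 1) → ℤ × ℤ, (∏ i, B (g i)) * W (∑ i, g i) := by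
  calc ∑' q, (Econv B)^[k] B q * W q
      = ∑' q, ∑' f : Fin k → ℤ × ℤ,
          ((∏ i, B (f i)) * B (q - ∑ i, f i)) * W q := by
        refine tsum_congr fun q => ?_
        rw [econv_iter_eq, ENNReal.tsum_mul_right]
    _ = ∑' f : Fin k → ℤ × ℤ, ∑' q,
          ((∏ i, B (f i)) * B (q - ∑ i, f i)) * W q := ENNReal.tsum_comm
    _ = ∑' f : Fin k → ℤ × ℤ, ∑' s,
          ((∏ i, B (f i)) * B s) * W (s + ∑ i, f i) := by
        refine tsum_congr fun f => ?_
        rw [← Equiv.tsum_eq (Equiv.addRight (∑ i, f i))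
          (fun q => ((∏ i, B (f i)) * B (q - ∑ i, f i)) * W q)]
        refine tsum_congr fun s => ?_
        simp
    _ = ∑' s, ∑' f : Fin k → ℤ × ℤ,
          ((∏ i, B (f i)) * B s) * W (s + ∑ i, f i) := ENNReal.tsum_comm
    _ = ∑' P : (ℤ × ℤ) × (Fin k → ℤ × ℤ),
          ((∏ i, B (P.2 i)) * B P.1) * W (P.1 + ∑ i, P.2 i) := ENNReal.tsum_prod.symm
    _ = ∑' g : Fin (k + 1) → ℤ × ℤ, (∏ i, B (g i)) * W (∑ i, g i) := by
        rw [← Equiv.tsum_eq (Fin.consEquiv fun _ => ℤ × ℤ)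
          (fun g : Fin (k + 1) → ℤ × ℤ => (∏ i, B (g i)) * W (∑ i, g i))]
        refine tsum_congr fun P => ?_
        simp only [Fin.consEquiv, Equiv.coe_fn_mk, Fin.prod_univ_succ, Fin.sum_univ_succ,
          Fin.cons_zero, Fin.cons_succ]
        ring

lemma tsum_prod_pow (h : ℤ × ℤ → ℝ≥0∞) (n : ℕ) :
    ∑' g : Fin n → ℤ × ℤ, ∏ i, h (g i) = (∑' x, h x) ^ n := by
  induction n with
  | zero =>
    rw [tsum_eq_single (fun _ => (0 : ℤ × ℤ)) (by
      intro f hf; exact absurd (Subsingleton.elim f _) hf)]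
    simp
  | succ n ih =>
    rw [← Equiv.tsum_eq (Fin.consEquiv fun _ => ℤ × ℤ)
      (fun g : Fin (n + 1) → ℤ × ℤ => ∏ i, h (g i))]
    calc ∑' P : (ℤ × ℤ) × (Fin n → ℤ × ℤ),
          ∏ i, h ((Fin.consEquiv fun _ => ℤ × ℤ) P i)
        = ∑' P : (ℤ × ℤ) × (Fin n → ℤ × ℤ), h P.1 * ∏ i, h (P.2 i) := by
          refine tsum_congr fun P => ?_
          simp [Fin.consEquiv, Fin.prod_univ_succ]
      _ = ∑' x, ∑' f : Fin n → ℤ × ℤ, h x * ∏ i, h (f i) :=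
          ENNReal.tsum_prod' (f := fun P : (ℤ × ℤ) × (Fin n → ℤ × ℤ) => h P.1 * ∏ i, h (P.2 i))
      _ = (∑' x, h x) ^ (n + 1) := by
          simp_rw [ENNReal.tsum_mul_left, ih]
          rw [ENNReal.tsum_mul_right]
          ring

end Stmt8Aux



open Finset in
lemma key_abstract {ι : Type*} [Fintype ι] [Nonempty ι]
    (t w1 w2 : ι → ℝ) (S C1 C2 : ℝ)
    (hS0 : 0 ≤ S) (hS1 : S ≤ 1)
    (ht0 : ∀ i, 0 ≤ t i) (ht1 : ∀ i, t i ≤ 1) (htS : ∀ i, t i ≤ S * (w1 i * w2 i))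
    (hw1 : ∀ i, 1 ≤ w1 i) (hw2 : ∀ i, 1 ≤ w2 i)
    (A B : ℝ) (hB0 : 0 ≤ B) (hC1 : 0 ≤ C1) (hC2 : 0 ≤ C2)
    (hA : ∃ K, A ≤ C1 * w1 K) (hB : ∃ J, B ≤ C2 * w2 J) :
    (∏ i, t i) * (A * B) ≤
      (C1 * C2 * S ^ (Fintype.card ι - 2)) * ∏ i, (w1 i * w2 i) := by
  classical
  obtain ⟨K, hAK⟩ := hA
  obtain ⟨J, hBJ⟩ := hB
  have hw10 : ∀ i, (0:ℝ) ≤ w1 i := fun i => zero_le_one.trans (hw1 i)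
  have hw20 : ∀ i, (0:ℝ) ≤ w2 i := fun i => zero_le_one.trans (hw2 i)
  set KJ : Finset ι := {K, J} with hKJdef
  have hsub : KJ ⊆ univ := subset_univ _
  have h1 : ∏ i ∈ KJ, t i ≤ 1 :=
    prod_le_one (fun i _ => ht0 i) (fun i _ => ht1 i)
  have hcard : Fintype.card ι - 2 ≤ (univ \ KJ).card := by
    rw [card_sdiff_of_subset hsub, card_univ]
    have : KJ.card ≤ 2 := (card_insert_le _ _).trans (by simp)
    omega
  have hpw0 : (0:ℝ) ≤ ∏ i ∈ univ \ KJ, (w1 i * w2 i) :=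
    prod_nonneg fun i _ => mul_nonneg (hw10 i) (hw20 i)
  have h2 : ∏ i ∈ univ \ KJ, t i
      ≤ S ^ (Fintype.card ι - 2) * ∏ i ∈ univ \ KJ, (w1 i * w2 i) := by
    calc ∏ i ∈ univ \ KJ, t i
        ≤ ∏ i ∈ univ \ KJ, (S * (w1 i * w2 i)) :=
          prod_le_prod (fun i _ => ht0 i) (fun i _ => htS i)
      _ = S ^ (univ \ KJ).card * ∏ i ∈ univ \ KJ, (w1 i * w2 i) := by
          rw [prod_mul_distrib, prod_const]
      _ ≤ _ := mul_le_mul_of_nonneg_right (pow_le_pow_of_le_one hS0 hS1 hcard) hpw0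
  have h3 : w1 K * w2 J ≤ ∏ i ∈ KJ, (w1 i * w2 i) := by
    by_cases hKJ : K = J
    · subst hKJ
      simp [hKJdef]
    · rw [hKJdef, prod_pair hKJ]
      have h4 : (1:ℝ) ≤ w2 K * w1 J := by
        simpa using mul_le_mul (hw2 K) (hw1 J) zero_le_one (hw20 K)
      calc w1 K * w2 J = (w1 K * w2 J) * 1 := (mul_one _).symm
        _ ≤ (w1 K * w2 J) * (w2 K * w1 J) :=
            mul_le_mul_of_nonneg_left h4 (mul_nonneg (hw10 K) (hw20 J))
        _ = (w1 K * w2 K) * (w1 J * w2 J) := by ring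
  have pt0 : (0:ℝ) ≤ ∏ i ∈ KJ, t i := prod_nonneg fun i _ => ht0 i
  have pt0' : (0:ℝ) ≤ ∏ i ∈ univ \ KJ, t i := prod_nonneg fun i _ => ht0 i
  calc (∏ i, t i) * (A * B)
      ≤ (∏ i, t i) * ((C1 * w1 K) * (C2 * w2 J)) := by
        refine mul_le_mul_of_nonneg_left ?_ (prod_nonneg fun i _ => ht0 i)
        exact mul_le_mul hAK hBJ hB0 (mul_nonneg hC1 (hw10 K))
    _ = (C1 * C2) * (((∏ i ∈ univ \ KJ, t i) * (w1 K * w2 J)) * (∏ i ∈ KJ, t i)) := by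
        rw [← prod_sdiff hsub]; ring
    _ ≤ (C1 * C2) * (((S ^ (Fintype.card ι - 2) * ∏ i ∈ univ \ KJ, (w1 i * w2 i))
          * (∏ i ∈ KJ, (w1 i * w2 i))) * 1) := by
        refine mul_le_mul_of_nonneg_left ?_ (mul_nonneg hC1 hC2)
        refine mul_le_mul ?_ h1 pt0 ?_
        · exact mul_le_mul h2 h3 (mul_nonneg (hw10 K) (hw20 J))
            (mul_nonneg (pow_nonneg hS0 _) hpw0)
        · exact mul_nonneg (mul_nonneg (pow_nonneg hS0 _) hpw0)
            (prod_nonneg fun i _ => mul_nonneg (hw10 i) (hw20 i))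
    _ = (C1 * C2 * S ^ (Fintype.card ι - 2)) * ((∏ i ∈ univ \ KJ, (w1 i * w2 i))
          * ∏ i ∈ KJ, (w1 i * w2 i)) := by ring
    _ = _ := by rw [prod_sdiff hsub]

open Stmt8Aux in
lemma main_aux (α β : ℝ) (hα : 0 < α) (hβ : 0 < β) (ρ : ℝ) (hρ0 : 0 < ρ) (hρ1 : ρ < 1)
    (a : ℤ × ℤ → ℂ)
    (hsum : Summable (fun p : ℤ × ℤ =>
      ‖a p‖ * (1 + |p.1| : ℝ) ^ α * (1 + |p.2| : ℝ) ^ β))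
    (hnorm : ∑' p : ℤ × ℤ,
      ‖a p‖ * (1 + |p.1| : ℝ) ^ α * (1 + |p.2| : ℝ) ^ β ≤ 1)
    (k : ℕ) :
    ∑' q : ℤ × ℤ,
        ‖((conv (fun q : ℤ × ℤ => a q * (1 - (ρ : ℂ) ^ (|q.1| + |q.2|))))^[k + 1]
            (fun q : ℤ × ℤ => a q * (1 - (ρ : ℂ) ^ (|q.1| + |q.2|))) q)‖ *
          (1 + |q.1| : ℝ) ^ α * (1 + |q.2| : ℝ) ^ β ≤
      ((k + 2 : ℕ) : ℝ) ^ (α + β) *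
        (⨆ q : ℤ × ℤ, (1 - ρ ^ (|q.1| + |q.2|)) /
          ((1 + |q.1| : ℝ) ^ α * (1 + |q.2| : ℝ) ^ β)) ^ k := by
  have hq1pos : ∀ q : ℤ × ℤ, (0:ℝ) < 1 + |q.1| := fun q => by positivity
  have hq2pos : ∀ q : ℤ × ℤ, (0:ℝ) < 1 + |q.2| := fun q => by positivity
  have hw1pos : ∀ q : ℤ × ℤ, (0:ℝ) < (1 + |q.1| : ℝ) ^ α :=
    fun q => Real.rpow_pos_of_pos (hq1pos q) _
  have hw2pos : ∀ q : ℤ × ℤ, (0:ℝ) < (1 + |q.2| : ℝ) ^ β :=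
    fun q => Real.rpow_pos_of_pos (hq2pos q) _
  have hw1one : ∀ q : ℤ × ℤ, (1:ℝ) ≤ (1 + |q.1| : ℝ) ^ α :=
    fun q => Real.one_le_rpow (le_add_of_nonneg_right (by positivity)) hα.le
  have hw2one : ∀ q : ℤ × ℤ, (1:ℝ) ≤ (1 + |q.2| : ℝ) ^ β :=
    fun q => Real.one_le_rpow (le_add_of_nonneg_right (by positivity)) hβ.le
  have hwone : ∀ q : ℤ × ℤ, (1:ℝ) ≤ (1 + |q.1| : ℝ) ^ α * (1 + |q.2| : ℝ) ^ β :=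
    fun q => by
      simpa using mul_le_mul (hw1one q) (hw2one q) zero_le_one
        (zero_le_one.trans (hw1one q))
  have hwpos : ∀ q : ℤ × ℤ, (0:ℝ) < (1 + |q.1| : ℝ) ^ α * (1 + |q.2| : ℝ) ^ β :=
    fun q => mul_pos (hw1pos q) (hw2pos q)
  have ht : ∀ q : ℤ × ℤ,
      0 ≤ 1 - ρ ^ (|q.1| + |q.2|) ∧ 1 - ρ ^ (|q.1| + |q.2|) ≤ 1 := by
    intro q
    obtain ⟨n, hn⟩ : ∃ n : ℕ, |q.1| + |q.2| = (n : ℤ) :=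
      ⟨(|q.1| + |q.2|).toNat, (Int.toNat_of_nonneg (by positivity)).symm⟩
    rw [hn, zpow_natCast]
    constructor
    · have := pow_le_one₀ hρ0.le hρ1.le (n := n); linarith
    · have := pow_pos hρ0 n; linarith
  set S := ⨆ q : ℤ × ℤ, (1 - ρ ^ (|q.1| + |q.2|)) /
      ((1 + |q.1| : ℝ) ^ α * (1 + |q.2| : ℝ) ^ β) with hS
  have hbdd : BddAbove (Set.range fun q : ℤ × ℤ =>
      (1 - ρ ^ (|q.1| + |q.2|)) / ((1 + |q.1| : ℝ) ^ α * (1 + |q.2| : ℝ) ^ β)) := by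
    refine ⟨1, ?_⟩
    rintro x ⟨q, rfl⟩
    exact (div_le_one (hwpos q)).2 ((ht q).2.trans (hwone q))
  have hS1 : S ≤ 1 := by
    rw [hS]
    exact ciSup_le fun q => (div_le_one (hwpos q)).2 ((ht q).2.trans (hwone q))
  have hS0 : 0 ≤ S := by
    rw [hS]
    have h := le_ciSup hbdd ((0, 0) : ℤ × ℤ)
    simpa using h
  have htS : ∀ q : ℤ × ℤ, 1 - ρ ^ (|q.1| + |q.2|)
      ≤ S * ((1 + |q.1| : ℝ) ^ α * (1 + |q.2| : ℝ) ^ β) := by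
    intro q
    rw [hS]
    exact (div_le_iff₀ (hwpos q)).1 (le_ciSup hbdd q)
  set b : ℤ × ℤ → ℂ := fun q => a q * (1 - (ρ : ℂ) ^ (|q.1| + |q.2|)) with hb
  have hbnorm : ∀ q : ℤ × ℤ, ‖b q‖ = ‖a q‖ * (1 - ρ ^ (|q.1| + |q.2|)) := by
    intro q
    rw [hb]
    simp only []
    rw [norm_mul]
    congr 1
    have hcast : (1 - (ρ:ℂ) ^ (|q.1| + |q.2|)) = ((1 - ρ ^ (|q.1| + |q.2|) : ℝ) : ℂ) := by
      push_cast
      ring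
    rw [hcast, Complex.norm_real, Real.norm_eq_abs]
    exact abs_of_nonneg (ht q).1
  set B : ℤ × ℤ → ℝ≥0∞ := fun r => (‖b r‖₊ : ℝ≥0∞) with hB
  set W : ℤ × ℤ → ℝ≥0∞ := fun q =>
    ENNReal.ofReal ((1 + |q.1| : ℝ) ^ α * (1 + |q.2| : ℝ) ^ β) with hW
  have hk2pos : (0:ℝ) < ((k + 2 : ℕ) : ℝ) := by positivity
  set C : ℝ := ((k + 2 : ℕ) : ℝ) ^ (α + β) * S ^ k with hC
  have hC0 : 0 ≤ C := mul_nonneg (Real.rpow_nonneg hk2pos.le _) (pow_nonneg hS0 _)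
  -- pointwise bound
  have hpt : ∀ g : Fin (k + 1 + 1) → ℤ × ℤ,
      (∏ i, B (g i)) * W (∑ i, g i)
        ≤ ENNReal.ofReal C * ∏ i, ((‖a (g i)‖₊ : ℝ≥0∞) * W (g i)) := by
    intro g
    have hA : ∃ K, (1 + |(∑ i, g i).1| : ℝ) ^ α
        ≤ ((k + 2 : ℕ) : ℝ) ^ α * (1 + |(g K).1| : ℝ) ^ α := by
      obtain ⟨K, -, hK⟩ := Finset.exists_max_image Finset.univ
        (fun i => |(g i).1|) Finset.univ_nonempty
      refine ⟨K, ?_⟩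
      have hz : 1 + |(∑ i, g i).1| ≤ ((k + 2 : ℕ) : ℤ) * (1 + |(g K).1|) := by
        have e1 : (∑ i, g i).1 = ∑ i, (g i).1 := Prod.fst_sum
        have e2 : |∑ i, (g i).1| ≤ ∑ i, |(g i).1| := Finset.abs_sum_le_sum_abs _ _
        have e3 : ∑ i, |(g i).1| ≤ ((k + 2 : ℕ) : ℤ) * |(g K).1| := by
          calc ∑ i, |(g i).1| ≤ ∑ _i : Fin (k + 1 + 1), |(g K).1| :=
                Finset.sum_le_sum fun i _ => hK i (Finset.mem_univ i)
            _ = ((k + 2 : ℕ) : ℤ) * |(g K).1| := by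
                rw [Finset.sum_const, Finset.card_univ, Fintype.card_fin]
                push_cast
                ring
        rw [e1]
        have hk2 : (1 : ℤ) ≤ ((k + 2 : ℕ) : ℤ) := by omega
        nlinarith [abs_nonneg (g K).1, e2, e3]
      calc (1 + |(∑ i, g i).1| : ℝ) ^ α
          ≤ (((k + 2 : ℕ) : ℝ) * (1 + |(g K).1|)) ^ α := by
            apply Real.rpow_le_rpow (by positivity) ?_ hα.le
            exact_mod_cast hz
        _ = ((k + 2 : ℕ) : ℝ) ^ α * (1 + |(g K).1| : ℝ) ^ α :=
            Real.mul_rpow hk2pos.le (by positivity)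
    have hBex : ∃ J, (1 + |(∑ i, g i).2| : ℝ) ^ β
        ≤ ((k + 2 : ℕ) : ℝ) ^ β * (1 + |(g J).2| : ℝ) ^ β := by
      obtain ⟨J, -, hJ⟩ := Finset.exists_max_image Finset.univ
        (fun i => |(g i).2|) Finset.univ_nonempty
      refine ⟨J, ?_⟩
      have hz : 1 + |(∑ i, g i).2| ≤ ((k + 2 : ℕ) : ℤ) * (1 + |(g J).2|) := by
        have e1 : (∑ i, g i).2 = ∑ i, (g i).2 := Prod.snd_sum
        have e2 : |∑ i, (g i).2| ≤ ∑ i, |(g i).2| := Finset.abs_sum_le_sum_abs _ _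
        have e3 : ∑ i, |(g i).2| ≤ ((k + 2 : ℕ) : ℤ) * |(g J).2| := by
          calc ∑ i, |(g i).2| ≤ ∑ _i : Fin (k + 1 + 1), |(g J).2| :=
                Finset.sum_le_sum fun i _ => hJ i (Finset.mem_univ i)
            _ = ((k + 2 : ℕ) : ℤ) * |(g J).2| := by
                rw [Finset.sum_const, Finset.card_univ, Fintype.card_fin]
                push_cast
                ring
        rw [e1]
        have hk2 : (1 : ℤ) ≤ ((k + 2 : ℕ) : ℤ) := by omega
        nlinarith [abs_nonneg (g J).2, e2, e3]
      calc (1 + |(∑ i, g i).2| : ℝ) ^ β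
          ≤ (((k + 2 : ℕ) : ℝ) * (1 + |(g J).2|)) ^ β := by
            apply Real.rpow_le_rpow (by positivity) ?_ hβ.le
            exact_mod_cast hz
        _ = ((k + 2 : ℕ) : ℝ) ^ β * (1 + |(g J).2| : ℝ) ^ β :=
            Real.mul_rpow hk2pos.le (by positivity)
    have habs := key_abstract (ι := Fin (k + 1 + 1))
        (fun i => 1 - ρ ^ (|(g i).1| + |(g i).2|))
        (fun i => (1 + |(g i).1| : ℝ) ^ α) (fun i => (1 + |(g i).2| : ℝ) ^ β)
        S (((k + 2 : ℕ) : ℝ) ^ α) (((k + 2 : ℕ) : ℝ) ^ β) hS0 hS1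
        (fun i => (ht _).1) (fun i => (ht _).2) (fun i => htS _)
        (fun i => hw1one _) (fun i => hw2one _)
        ((1 + |(∑ i, g i).1| : ℝ) ^ α) ((1 + |(∑ i, g i).2| : ℝ) ^ β)
        (hw2pos _).le (Real.rpow_nonneg hk2pos.le _) (Real.rpow_nonneg hk2pos.le _)
        hA hBex
    have hcard' : Fintype.card (Fin (k + 1 + 1)) - 2 = k := by simp
    rw [hcard'] at habs
    have hk2' : ((k + 2 : ℕ) : ℝ) ^ α * ((k + 2 : ℕ) : ℝ) ^ β
        = ((k + 2 : ℕ) : ℝ) ^ (α + β) := (Real.rpow_add hk2pos α β).symm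
    have hreal : (∏ i, ‖b (g i)‖) *
          ((1 + |(∑ i, g i).1| : ℝ) ^ α * (1 + |(∑ i, g i).2| : ℝ) ^ β)
        ≤ C * ∏ i, (‖a (g i)‖ *
            ((1 + |(g i).1| : ℝ) ^ α * (1 + |(g i).2| : ℝ) ^ β)) := by
      calc (∏ i, ‖b (g i)‖) *
            ((1 + |(∑ i, g i).1| : ℝ) ^ α * (1 + |(∑ i, g i).2| : ℝ) ^ β)
          = (∏ i, ‖a (g i)‖) * ((∏ i, (1 - ρ ^ (|(g i).1| + |(g i).2|))) *
              ((1 + |(∑ i, g i).1| : ℝ) ^ α * (1 + |(∑ i, g i).2| : ℝ) ^ β)) := by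
            simp_rw [hbnorm]
            rw [Finset.prod_mul_distrib]
            ring
        _ ≤ (∏ i, ‖a (g i)‖) * ((((k + 2 : ℕ) : ℝ) ^ α * ((k + 2 : ℕ) : ℝ) ^ β * S ^ k) *
              ∏ i, ((1 + |(g i).1| : ℝ) ^ α * (1 + |(g i).2| : ℝ) ^ β)) :=
            mul_le_mul_of_nonneg_left habs (Finset.prod_nonneg fun i _ => norm_nonneg _)
        _ = C * ∏ i, (‖a (g i)‖ *
              ((1 + |(g i).1| : ℝ) ^ α * (1 + |(g i).2| : ℝ) ^ β)) := by
            simp only [Finset.prod_mul_distrib]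
            rw [hC, ← hk2']
            ring
    have lhs_eq : (∏ i, B (g i)) * W (∑ i, g i)
        = ENNReal.ofReal ((∏ i, ‖b (g i)‖) *
            ((1 + |(∑ i, g i).1| : ℝ) ^ α * (1 + |(∑ i, g i).2| : ℝ) ^ β)) := by
      rw [ENNReal.ofReal_mul (Finset.prod_nonneg fun i _ => norm_nonneg _),
        ENNReal.ofReal_prod_of_nonneg (fun i _ => norm_nonneg _)]
      congr 1
      exact Finset.prod_congr rfl fun i _ => (ofReal_norm (b (g i))).symm
    have rhs_eq : ENNReal.ofReal C * ∏ i, ((‖a (g i)‖₊ : ℝ≥0∞) * W (g i))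
        = ENNReal.ofReal (C * ∏ i, (‖a (g i)‖ *
            ((1 + |(g i).1| : ℝ) ^ α * (1 + |(g i).2| : ℝ) ^ β))) := by
      rw [ENNReal.ofReal_mul hC0,
        ENNReal.ofReal_prod_of_nonneg (fun i _ => mul_nonneg (norm_nonneg _) (hwpos _).le)]
      congr 1
      refine Finset.prod_congr rfl fun i _ => ?_
      rw [ENNReal.ofReal_mul (norm_nonneg _), ofReal_norm]; rfl
    rw [lhs_eq, rhs_eq]
    exact ENNReal.ofReal_le_ofReal hreal
  have hkey : ∑' q, (Econv B)^[k + 1] B q * W q ≤ ENNReal.ofReal C := by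
    rw [sum_weighted]
    calc ∑' g : Fin (k + 1 + 1) → ℤ × ℤ, (∏ i, B (g i)) * W (∑ i, g i)
        ≤ ∑' g : Fin (k + 1 + 1) → ℤ × ℤ,
            ENNReal.ofReal C * ∏ i, ((‖a (g i)‖₊ : ℝ≥0∞) * W (g i)) :=
          ENNReal.tsum_le_tsum hpt
      _ = ENNReal.ofReal C * (∑' q, (‖a q‖₊ : ℝ≥0∞) * W q) ^ (k + 1 + 1) := by
          rw [ENNReal.tsum_mul_left]
          congr 1
          exact tsum_prod_pow (fun q => (‖a q‖₊ : ℝ≥0∞) * W q) (k + 1 + 1)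
      _ ≤ ENNReal.ofReal C * 1 ^ (k + 1 + 1) := by
          gcongr
          have he : ∀ q : ℤ × ℤ, (‖a q‖₊ : ℝ≥0∞) * W q
              = ENNReal.ofReal (‖a q‖ * (1 + |q.1| : ℝ) ^ α * (1 + |q.2| : ℝ) ^ β) := by
            intro q
            rw [mul_assoc, ENNReal.ofReal_mul (norm_nonneg _), ofReal_norm]; rfl
          calc ∑' q : ℤ × ℤ, (‖a q‖₊ : ℝ≥0∞) * W q
              = ∑' q : ℤ × ℤ, ENNReal.ofReal
                  (‖a q‖ * (1 + |q.1| : ℝ) ^ α * (1 + |q.2| : ℝ) ^ β) := tsum_congr he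
            _ = ENNReal.ofReal (∑' q : ℤ × ℤ,
                  ‖a q‖ * (1 + |q.1| : ℝ) ^ α * (1 + |q.2| : ℝ) ^ β) :=
                (ENNReal.ofReal_tsum_of_nonneg (fun q => by positivity) hsum).symm
            _ ≤ ENNReal.ofReal 1 := ENNReal.ofReal_le_ofReal hnorm
            _ = 1 := ENNReal.ofReal_one
      _ = ENNReal.ofReal C := by rw [one_pow, mul_one]
  by_cases hs : Summable (fun q : ℤ × ℤ =>
      ‖(conv b)^[k + 1] b q‖ * (1 + |q.1| : ℝ) ^ α * (1 + |q.2| : ℝ) ^ β)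
  · have h0 : ∀ q : ℤ × ℤ,
        0 ≤ ‖(conv b)^[k + 1] b q‖ * (1 + |q.1| : ℝ) ^ α * (1 + |q.2| : ℝ) ^ β :=
      fun q => by positivity
    have hofreal := ENNReal.ofReal_tsum_of_nonneg h0 hs
    have hle : ∑' q : ℤ × ℤ, ENNReal.ofReal
        (‖(conv b)^[k + 1] b q‖ * (1 + |q.1| : ℝ) ^ α * (1 + |q.2| : ℝ) ^ β)
        ≤ ENNReal.ofReal C := by
      refine le_trans (ENNReal.tsum_le_tsum fun q => ?_) hkey
      rw [mul_assoc, ENNReal.ofReal_mul (norm_nonneg _), ofReal_norm]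
      exact mul_le_mul_left (enorm_conv_iter_le b (k + 1) q) _
    exact (ENNReal.ofReal_le_ofReal_iff hC0).1 (le_trans (le_of_eq hofreal) hle)
  · rw [tsum_eq_zero_of_not_summable hs]
    exact hC0

/-- Norm estimate for powers of `g = Σ a_{n,m}(1-ρ^{|n|+|m|}) zⁿ wᵐ`:
`‖g^p‖_{α,β} ≤ p^{α+β} S^{p-2}` where `S` is the sup of the ratios. -/
theorem stmt_8 (α β : ℝ) (hα : 0 < α) (hβ : 0 < β) (ρ : ℝ) (hρ0 : 0 < ρ) (hρ1 : ρ < 1)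
    (a : ℤ × ℤ → ℂ)
    (hsum : Summable (fun p : ℤ × ℤ =>
      ‖a p‖ * (1 + |p.1| : ℝ) ^ α * (1 + |p.2| : ℝ) ^ β))
    (hnorm : ∑' p : ℤ × ℤ,
      ‖a p‖ * (1 + |p.1| : ℝ) ^ α * (1 + |p.2| : ℝ) ^ β ≤ 1)
    (p : ℕ) (hp : 2 ≤ p) :
    ∑' q : ℤ × ℤ,
        ‖((conv (fun q : ℤ × ℤ => a q * (1 - (ρ : ℂ) ^ (|q.1| + |q.2|))))^[p - 1]
            (fun q : ℤ × ℤ => a q * (1 - (ρ : ℂ) ^ (|q.1| + |q.2|))) q)‖ *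
          (1 + |q.1| : ℝ) ^ α * (1 + |q.2| : ℝ) ^ β ≤
      (p : ℝ) ^ (α + β) *
        (⨆ q : ℤ × ℤ, (1 - ρ ^ (|q.1| + |q.2|)) /
          ((1 + |q.1| : ℝ) ^ α * (1 + |q.2| : ℝ) ^ β)) ^ (p - 2) := by
  obtain ⟨k, rfl⟩ : ∃ k, p = k + 2 := ⟨p - 2, by omega⟩
  exact main_aux α β hα hβ ρ hρ0 hρ1 a hsum hnorm k
end

section
/- Let f(z,w) = Σ_{n,m≥0} a_{n,m} z^n w^m with ‖f‖_{α,β} = Σ_{n,m≥0} |a_{n,m}|(1+n)^α(1+m)^β < ∞ (where α, β ≥ 0), and let λ ∈ ℂ with |λ| < 1. Define L_λ(f)(z,w) = (f(z,w) − f(λ,w))/(z−λ) for z ≠ λ (extended by ∂_z f(λ,w) at z = λ). Then L_λ(f) belongs to the same weighted algebra and ‖L_λ(f)‖_{α,β} ≤ ‖f‖_{α,β}/(1−|λ|). -/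
open Metric

private lemma e12_inj : Function.Injective
    (fun q : (ℕ × ℕ) × ℕ => (((q.1.1 + 1 + q.2, q.1.2), q.2) : (ℕ × ℕ) × ℕ)) := by
  rintro ⟨⟨n, m⟩, k⟩ ⟨⟨n', m'⟩, k'⟩ h
  simp only [Prod.mk.injEq] at h
  obtain ⟨⟨h1, h2⟩, h3⟩ := h
  refine Prod.ext (Prod.ext ?_ h2) h3
  simp only
  omega

private lemma sum12 (α β : ℝ) (hα : 0 ≤ α) (hβ : 0 ≤ β) (a : ℕ × ℕ → ℂ)
    (hsum : Summable (fun p : ℕ × ℕ =>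
      ‖a p‖ * (1 + p.1 : ℝ) ^ α * (1 + p.2 : ℝ) ^ β))
    (lam : ℂ) (hlam : ‖lam‖ < 1) :
    Summable (fun q : (ℕ × ℕ) × ℕ =>
        ‖a (q.1.1 + 1 + q.2, q.1.2)‖ * (1 + (q.1.1 + 1 + q.2) : ℝ) ^ α
          * (1 + q.1.2 : ℝ) ^ β * ‖lam‖ ^ q.2) ∧
      (∑' q : (ℕ × ℕ) × ℕ,
        ‖a (q.1.1 + 1 + q.2, q.1.2)‖ * (1 + (q.1.1 + 1 + q.2) : ℝ) ^ α
          * (1 + q.1.2 : ℝ) ^ β * ‖lam‖ ^ q.2) ≤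
        (∑' p : ℕ × ℕ, ‖a p‖ * (1 + p.1 : ℝ) ^ α * (1 + p.2 : ℝ) ^ β) / (1 - ‖lam‖) := by
  have hr0 : (0:ℝ) ≤ ‖lam‖ := norm_nonneg _
  have hA0 : ∀ p : ℕ × ℕ, 0 ≤ ‖a p‖ * (1 + p.1 : ℝ) ^ α * (1 + p.2 : ℝ) ^ β := by
    intro p; have := norm_nonneg (a p); positivity
  have hH : Summable (fun q : (ℕ × ℕ) × ℕ =>
      (‖a q.1‖ * (1 + q.1.1 : ℝ) ^ α * (1 + q.1.2 : ℝ) ^ β) * ‖lam‖ ^ q.2) :=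
    hsum.mul_of_nonneg (summable_geometric_of_lt_one hr0 hlam) hA0
      (fun k => pow_nonneg hr0 k)
  have hg : Summable (fun q : (ℕ × ℕ) × ℕ =>
      ‖a (q.1.1 + 1 + q.2, q.1.2)‖ * (1 + (q.1.1 + 1 + q.2) : ℝ) ^ α
        * (1 + q.1.2 : ℝ) ^ β * ‖lam‖ ^ q.2) := by
    have := hH.comp_injective e12_inj
    simpa [Function.comp_def, Nat.cast_add] using this
  refine ⟨hg, ?_⟩
  have h2 : (∑' q : (ℕ × ℕ) × ℕ,
      ‖a (q.1.1 + 1 + q.2, q.1.2)‖ * (1 + (q.1.1 + 1 + q.2) : ℝ) ^ α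
        * (1 + q.1.2 : ℝ) ^ β * ‖lam‖ ^ q.2) ≤
      ∑' q : (ℕ × ℕ) × ℕ,
        (‖a q.1‖ * (1 + q.1.1 : ℝ) ^ α * (1 + q.1.2 : ℝ) ^ β) * ‖lam‖ ^ q.2 := by
    apply Summable.tsum_le_tsum_of_inj _ e12_inj
      (fun q _ => mul_nonneg (hA0 _) (pow_nonneg hr0 _))
      (fun q => ?_) hg hH
    · simp [Nat.cast_add]
  have h3 : (∑' q : (ℕ × ℕ) × ℕ,
      (‖a q.1‖ * (1 + q.1.1 : ℝ) ^ α * (1 + q.1.2 : ℝ) ^ β) * ‖lam‖ ^ q.2)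
      = (∑' p : ℕ × ℕ, ‖a p‖ * (1 + p.1 : ℝ) ^ α * (1 + p.2 : ℝ) ^ β) * (1 - ‖lam‖)⁻¹ := by
    rw [Summable.tsum_prod' hH (fun p => hH.prod_factor p)]
    have : ∀ p : ℕ × ℕ, (∑' k : ℕ,
        (‖a p‖ * (1 + p.1 : ℝ) ^ α * (1 + p.2 : ℝ) ^ β) * ‖lam‖ ^ k)
        = (‖a p‖ * (1 + p.1 : ℝ) ^ α * (1 + p.2 : ℝ) ^ β) * (1 - ‖lam‖)⁻¹ := by
      intro p
      rw [tsum_mul_left, tsum_geometric_of_lt_one hr0 hlam]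
    rw [tsum_congr this, tsum_mul_right]
  rw [div_eq_mul_inv]
  exact h2.trans (le_of_eq h3)

private lemma sum12c (α β : ℝ) (hα : 0 ≤ α) (hβ : 0 ≤ β) (a : ℕ × ℕ → ℂ)
    (hsum : Summable (fun p : ℕ × ℕ =>
      ‖a p‖ * (1 + p.1 : ℝ) ^ α * (1 + p.2 : ℝ) ^ β))
    (lam : ℂ) (hlam : ‖lam‖ < 1) :
    (∀ p : ℕ × ℕ, Summable (fun k : ℕ => ‖a (p.1 + 1 + k, p.2) * lam ^ k‖)) ∧
    Summable (fun p : ℕ × ℕ =>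
        ‖∑' k : ℕ, a (p.1 + 1 + k, p.2) * lam ^ k‖ * (1 + p.1 : ℝ) ^ α * (1 + p.2 : ℝ) ^ β) ∧
      (∑' p : ℕ × ℕ,
        ‖∑' k : ℕ, a (p.1 + 1 + k, p.2) * lam ^ k‖ * (1 + p.1 : ℝ) ^ α * (1 + p.2 : ℝ) ^ β) ≤
        (∑' p : ℕ × ℕ, ‖a p‖ * (1 + p.1 : ℝ) ^ α * (1 + p.2 : ℝ) ^ β) / (1 - ‖lam‖) := by
  have hr0 : (0:ℝ) ≤ ‖lam‖ := norm_nonneg _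
  obtain ⟨hg, hgle⟩ := sum12 α β hα hβ a hsum lam hlam
  have hbase : ∀ n : ℕ, (0:ℝ) ≤ 1 + n := by intro n; positivity
  have hWa1 : ∀ x : ℝ, 1 ≤ x → 1 ≤ x ^ α := fun x hx => Real.one_le_rpow hx hα
  have hWb1 : ∀ x : ℝ, 1 ≤ x → 1 ≤ x ^ β := fun x hx => Real.one_le_rpow hx hβ
  have hWa0 : ∀ x : ℝ, 0 ≤ x → 0 ≤ x ^ α := fun x hx => Real.rpow_nonneg hx α
  have hWb0 : ∀ x : ℝ, 0 ≤ x → 0 ≤ x ^ β := fun x hx => Real.rpow_nonneg hx β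
  have h1n : ∀ n : ℕ, (1:ℝ) ≤ 1 + n := fun n => le_add_of_nonneg_right (Nat.cast_nonneg n)
  have h1nk : ∀ n k : ℕ, (1:ℝ) ≤ 1 + (n + 1 + k : ℕ) := fun n k => h1n _
  have hgfib : ∀ p : ℕ × ℕ, Summable (fun k : ℕ =>
      ‖a (p.1 + 1 + k, p.2)‖ * (1 + (p.1 + 1 + k) : ℝ) ^ α
        * (1 + p.2 : ℝ) ^ β * ‖lam‖ ^ k) := fun p => hg.prod_factor p
  have hcterm : ∀ p : ℕ × ℕ, Summable (fun k : ℕ => ‖a (p.1 + 1 + k, p.2) * lam ^ k‖) := by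
    intro p
    apply Summable.of_nonneg_of_le (fun k => norm_nonneg _) _ (hgfib p)
    intro k
    rw [norm_mul, norm_pow]
    calc ‖a (p.1 + 1 + k, p.2)‖ * ‖lam‖ ^ k
        = ‖a (p.1 + 1 + k, p.2)‖ * 1 * 1 * ‖lam‖ ^ k := by ring
      _ ≤ ‖a (p.1 + 1 + k, p.2)‖ * (1 + (p.1 + 1 + k) : ℝ) ^ α
            * (1 + p.2 : ℝ) ^ β * ‖lam‖ ^ k := by
          apply mul_le_mul_of_nonneg_right _ (pow_nonneg hr0 k)
          apply mul_le_mul (mul_le_mul le_rfl (hWa1 _ (by have h1 : (0:ℝ) ≤ (p.1:ℝ) := Nat.cast_nonneg _; have h2 : (0:ℝ) ≤ (k:ℝ) := Nat.cast_nonneg _; push_cast; linarith)) zero_le_one (norm_nonneg _)) (hWb1 _ (h1n _))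
            zero_le_one
          have := norm_nonneg (a (p.1 + 1 + k, p.2)); positivity
  refine ⟨hcterm, ?_⟩
  have hc_bound : ∀ p : ℕ × ℕ,
      ‖∑' k : ℕ, a (p.1 + 1 + k, p.2) * lam ^ k‖ * (1 + p.1 : ℝ) ^ α * (1 + p.2 : ℝ) ^ β ≤
      ∑' k : ℕ, ‖a (p.1 + 1 + k, p.2)‖ * (1 + (p.1 + 1 + k) : ℝ) ^ α
        * (1 + p.2 : ℝ) ^ β * ‖lam‖ ^ k := by
    intro p
    have h1 : ‖∑' k : ℕ, a (p.1 + 1 + k, p.2) * lam ^ k‖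
        ≤ ∑' k, ‖a (p.1 + 1 + k, p.2) * lam ^ k‖ := norm_tsum_le_tsum_norm (hcterm p)
    calc ‖∑' k : ℕ, a (p.1 + 1 + k, p.2) * lam ^ k‖ * (1 + p.1 : ℝ) ^ α * (1 + p.2 : ℝ) ^ β
        = ‖∑' k : ℕ, a (p.1 + 1 + k, p.2) * lam ^ k‖
            * ((1 + p.1 : ℝ) ^ α * (1 + p.2 : ℝ) ^ β) := by ring
      _ ≤ (∑' k, ‖a (p.1 + 1 + k, p.2) * lam ^ k‖)
            * ((1 + p.1 : ℝ) ^ α * (1 + p.2 : ℝ) ^ β) := by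
          exact mul_le_mul_of_nonneg_right h1 (mul_nonneg (hWa0 _ (by positivity)) (hWb0 _ (by positivity)))
      _ = ∑' k, ‖a (p.1 + 1 + k, p.2) * lam ^ k‖
            * ((1 + p.1 : ℝ) ^ α * (1 + p.2 : ℝ) ^ β) := by rw [tsum_mul_right]
      _ ≤ ∑' k : ℕ, ‖a (p.1 + 1 + k, p.2)‖ * (1 + (p.1 + 1 + k) : ℝ) ^ α
            * (1 + p.2 : ℝ) ^ β * ‖lam‖ ^ k := by
          apply Summable.tsum_le_tsum _ ((hcterm p).mul_right _) (hgfib p)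
          intro k
          rw [norm_mul, norm_pow]
          have hle : ((1 + p.1 : ℝ)) ^ α ≤ ((1 + (p.1 + 1 + k) : ℝ)) ^ α := by
            apply Real.rpow_le_rpow (by positivity) _ hα
            push_cast; linarith [Nat.cast_nonneg (α := ℝ) k]
          calc ‖a (p.1 + 1 + k, p.2)‖ * ‖lam‖ ^ k
                * ((1 + p.1 : ℝ) ^ α * (1 + p.2 : ℝ) ^ β)
              ≤ ‖a (p.1 + 1 + k, p.2)‖ * ‖lam‖ ^ k
                * ((1 + (p.1 + 1 + k) : ℝ) ^ α * (1 + p.2 : ℝ) ^ β) := by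
                apply mul_le_mul_of_nonneg_left
                  (mul_le_mul_of_nonneg_right hle (hWb0 _ (by positivity)))
                have := norm_nonneg (a (p.1 + 1 + k, p.2))
                positivity
            _ = ‖a (p.1 + 1 + k, p.2)‖ * (1 + (p.1 + 1 + k) : ℝ) ^ α
                * (1 + p.2 : ℝ) ^ β * ‖lam‖ ^ k := by ring
  have hmarg : HasSum (fun p : ℕ × ℕ => ∑' k : ℕ,
      ‖a (p.1 + 1 + k, p.2)‖ * (1 + (p.1 + 1 + k) : ℝ) ^ α
        * (1 + p.2 : ℝ) ^ β * ‖lam‖ ^ k)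
      (∑' q : (ℕ × ℕ) × ℕ, ‖a (q.1.1 + 1 + q.2, q.1.2)‖ * (1 + (q.1.1 + 1 + q.2) : ℝ) ^ α
        * (1 + q.1.2 : ℝ) ^ β * ‖lam‖ ^ q.2) :=
    hg.hasSum.prod_fiberwise (fun p => (hgfib p).hasSum)
  have hcsum : Summable (fun p : ℕ × ℕ =>
      ‖∑' k : ℕ, a (p.1 + 1 + k, p.2) * lam ^ k‖ * (1 + p.1 : ℝ) ^ α * (1 + p.2 : ℝ) ^ β) :=
    Summable.of_nonneg_of_le
      (fun p => mul_nonneg (mul_nonneg (norm_nonneg _) (hWa0 _ (by positivity))) (hWb0 _ (by positivity)))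
      hc_bound hmarg.summable
  refine ⟨hcsum, ?_⟩
  calc (∑' p : ℕ × ℕ,
      ‖∑' k : ℕ, a (p.1 + 1 + k, p.2) * lam ^ k‖ * (1 + p.1 : ℝ) ^ α * (1 + p.2 : ℝ) ^ β)
      ≤ ∑' p : ℕ × ℕ, ∑' k : ℕ,
        ‖a (p.1 + 1 + k, p.2)‖ * (1 + (p.1 + 1 + k) : ℝ) ^ α
          * (1 + p.2 : ℝ) ^ β * ‖lam‖ ^ k := Summable.tsum_le_tsum hc_bound hcsum hmarg.summable
    _ = ∑' q : (ℕ × ℕ) × ℕ, ‖a (q.1.1 + 1 + q.2, q.1.2)‖ * (1 + (q.1.1 + 1 + q.2) : ℝ) ^ α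
          * (1 + q.1.2 : ℝ) ^ β * ‖lam‖ ^ q.2 := hmarg.tsum_eq
    _ ≤ _ := hgle

set_option maxHeartbeats 1000000 in
private lemma key12 (a : ℕ × ℕ → ℂ)
    (hnorm : Summable (fun p : ℕ × ℕ => ‖a p‖))
    (f : ℂ → ℂ → ℂ)
    (hf : ∀ z w : ℂ, z ∈ ball (0:ℂ) 1 → w ∈ ball (0:ℂ) 1 →
      HasSum (fun p : ℕ × ℕ => a p * z ^ p.1 * w ^ p.2) (f z w))
    (lam : ℂ) (hlam : ‖lam‖ < 1) (w : ℂ) (hw : ‖w‖ < 1)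
    (z : ℂ) (hz : ‖z‖ < 1) (hne : z ≠ lam) :
    f z w - f lam w = (z - lam) *
      ∑' p : ℕ × ℕ, (∑' k : ℕ, a (p.1 + 1 + k, p.2) * lam ^ k) * z ^ p.1 * w ^ p.2 := by
  have hr0 : (0:ℝ) ≤ ‖lam‖ := norm_nonneg _
  have hsub : z - lam ≠ 0 := sub_ne_zero.mpr hne
  have hsub' : lam - z ≠ 0 := sub_ne_zero.mpr (Ne.symm hne)
  -- the majorant
  have hH' : Summable (fun q : (ℕ × ℕ) × ℕ => ‖a q.1‖ * ‖lam‖ ^ q.2) :=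
    hnorm.mul_of_nonneg (summable_geometric_of_lt_one hr0 hlam)
      (fun p => norm_nonneg _) (fun k => pow_nonneg hr0 k)
  have hmaj : Summable (fun q : (ℕ × ℕ) × ℕ =>
      ‖a (q.1.1 + 1 + q.2, q.1.2)‖ * ‖lam‖ ^ q.2) := by
    have := hH'.comp_injective e12_inj
    simpa [Function.comp_def] using this
  -- the triple-indexed family
  have hT : Summable (fun q : (ℕ × ℕ) × ℕ =>
      a (q.1.1 + 1 + q.2, q.1.2) * lam ^ q.2 * z ^ q.1.1 * w ^ q.1.2) := by
    apply Summable.of_norm_bounded hmaj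
    intro q
    rw [norm_mul, norm_mul, norm_mul, norm_pow, norm_pow, norm_pow]
    calc ‖a (q.1.1 + 1 + q.2, q.1.2)‖ * ‖lam‖ ^ q.2 * ‖z‖ ^ q.1.1 * ‖w‖ ^ q.1.2
        ≤ ‖a (q.1.1 + 1 + q.2, q.1.2)‖ * ‖lam‖ ^ q.2 * 1 * 1 := by
          apply mul_le_mul (mul_le_mul le_rfl (pow_le_one₀ (norm_nonneg z) hz.le)
            (by positivity) (by positivity)) (pow_le_one₀ (norm_nonneg w) hw.le)
            (by positivity) (by positivity)
      _ = ‖a (q.1.1 + 1 + q.2, q.1.2)‖ * ‖lam‖ ^ q.2 := by ring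
  -- the reindexed family
  have hFsupp : (Function.support (fun q : (ℕ × ℕ) × ℕ =>
      if q.2 < q.1.1 then a q.1 * lam ^ q.2 * z ^ (q.1.1 - 1 - q.2) * w ^ q.1.2 else 0))
      ⊆ Set.range (fun q : (ℕ × ℕ) × ℕ => (((q.1.1 + 1 + q.2, q.1.2), q.2) : (ℕ × ℕ) × ℕ)) := by
    rintro ⟨⟨N, m⟩, k⟩ hq
    simp only [Function.mem_support] at hq
    by_cases hk : k < N
    · refine ⟨((N - 1 - k, m), k), ?_⟩
      have hNk : N - 1 - k + 1 + k = N := by omega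
      simp [hNk]
    · exact absurd (if_neg hk) hq
  have hFe : ∀ q : (ℕ × ℕ) × ℕ,
      (fun q : (ℕ × ℕ) × ℕ =>
        if q.2 < q.1.1 then a q.1 * lam ^ q.2 * z ^ (q.1.1 - 1 - q.2) * w ^ q.1.2 else 0)
        ((((q.1.1 + 1 + q.2, q.1.2), q.2) : (ℕ × ℕ) × ℕ))
      = a (q.1.1 + 1 + q.2, q.1.2) * lam ^ q.2 * z ^ q.1.1 * w ^ q.1.2 := by
    intro q
    show (if q.2 < q.1.1 + 1 + q.2 then
        a (q.1.1 + 1 + q.2, q.1.2) * lam ^ q.2 * z ^ (q.1.1 + 1 + q.2 - 1 - q.2) * w ^ q.1.2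
      else 0) = _
    rw [if_pos (show q.2 < q.1.1 + 1 + q.2 by omega),
      show q.1.1 + 1 + q.2 - 1 - q.2 = q.1.1 by omega]
  have hF : Summable (fun q : (ℕ × ℕ) × ℕ =>
      if q.2 < q.1.1 then a q.1 * lam ^ q.2 * z ^ (q.1.1 - 1 - q.2) * w ^ q.1.2 else 0) := by
    rw [← Function.Injective.summable_iff e12_inj (by
      intro q hq
      by_contra h
      exact hq (hFsupp h))]
    apply Summable.congr hT
    intro q
    exact (hFe q).symm
  have hz' : z ∈ ball (0:ℂ) 1 := mem_ball_zero_iff.mpr hz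
  have hw' : w ∈ ball (0:ℂ) 1 := mem_ball_zero_iff.mpr hw
  have hlam' : lam ∈ ball (0:ℂ) 1 := mem_ball_zero_iff.mpr hlam
  -- step 1 : unfold c and merge the two sums
  have step1 : (∑' p : ℕ × ℕ, (∑' k : ℕ, a (p.1 + 1 + k, p.2) * lam ^ k) * z ^ p.1 * w ^ p.2)
      = ∑' q : (ℕ × ℕ) × ℕ,
        a (q.1.1 + 1 + q.2, q.1.2) * lam ^ q.2 * z ^ q.1.1 * w ^ q.1.2 := by
    rw [Summable.tsum_prod' hT (fun p => hT.prod_factor p)]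
    apply tsum_congr
    intro p
    rw [← tsum_mul_right, ← tsum_mul_right]
  -- step 2 : reindex
  have step2 : (∑' q : (ℕ × ℕ) × ℕ,
        a (q.1.1 + 1 + q.2, q.1.2) * lam ^ q.2 * z ^ q.1.1 * w ^ q.1.2)
      = ∑' q : (ℕ × ℕ) × ℕ,
        if q.2 < q.1.1 then a q.1 * lam ^ q.2 * z ^ (q.1.1 - 1 - q.2) * w ^ q.1.2 else 0 := by
    rw [← Function.Injective.tsum_eq e12_inj hFsupp]
    exact tsum_congr (fun q => (hFe q).symm)
  -- step 3 : sum the inner finite geometric sums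
  have step3 : (∑' q : (ℕ × ℕ) × ℕ,
        if q.2 < q.1.1 then a q.1 * lam ^ q.2 * z ^ (q.1.1 - 1 - q.2) * w ^ q.1.2 else 0)
      = ∑' p : ℕ × ℕ, a p * w ^ p.2 * (z ^ p.1 - lam ^ p.1) * (z - lam)⁻¹ := by
    rw [Summable.tsum_prod' hF (fun p => hF.prod_factor p)]
    apply tsum_congr
    intro p
    have h0 : ∀ k ∉ Finset.range p.1,
        (if k < p.1 then a p * lam ^ k * z ^ (p.1 - 1 - k) * w ^ p.2 else 0) = 0 := by
      intro k hk
      rw [if_neg (by simpa using hk)]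
    rw [tsum_eq_sum h0]
    have hgs := geom_sum₂_mul lam z p.1
    have hS : (∑ i ∈ Finset.range p.1, lam ^ i * z ^ (p.1 - 1 - i))
        = (lam ^ p.1 - z ^ p.1) / (lam - z) := by
      rw [eq_div_iff hsub']
      exact hgs
    calc (∑ k ∈ Finset.range p.1,
          if k < p.1 then a p * lam ^ k * z ^ (p.1 - 1 - k) * w ^ p.2 else 0)
        = ∑ k ∈ Finset.range p.1, a p * w ^ p.2 * (lam ^ k * z ^ (p.1 - 1 - k)) := by
          apply Finset.sum_congr rfl
          intro k hk
          rw [if_pos (Finset.mem_range.mp hk)]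
          ring
      _ = a p * w ^ p.2 * ∑ k ∈ Finset.range p.1, lam ^ k * z ^ (p.1 - 1 - k) :=
          (Finset.mul_sum _ _ _).symm
      _ = a p * w ^ p.2 * ((lam ^ p.1 - z ^ p.1) / (lam - z)) := by rw [hS]
      _ = a p * w ^ p.2 * (z ^ p.1 - lam ^ p.1) * (z - lam)⁻¹ := by
          field_simp
          ring
  -- step 4 : recognize the difference of the two sums
  have step4 : (∑' p : ℕ × ℕ, a p * w ^ p.2 * (z ^ p.1 - lam ^ p.1) * (z - lam)⁻¹)
      = (f z w - f lam w) * (z - lam)⁻¹ := by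
    have h := ((hf z w hz' hw').sub (hf lam w hlam' hw')).mul_right (z - lam)⁻¹
    have heq : (fun p : ℕ × ℕ => a p * w ^ p.2 * (z ^ p.1 - lam ^ p.1) * (z - lam)⁻¹)
        = fun p : ℕ × ℕ =>
          (a p * z ^ p.1 * w ^ p.2 - a p * lam ^ p.1 * w ^ p.2) * (z - lam)⁻¹ :=
      funext fun p => by ring
    rw [heq]
    exact h.tsum_eq
  rw [step1, step2, step3, step4]
  field_simp

set_option maxHeartbeats 1000000 in
/-- The divided difference `L_λ f` stays in the analytic Beurling algebra with
`‖L_λ f‖_{α,β} ≤ ‖f‖_{α,β}/(1-|λ|)`. -/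
theorem stmt_12 (α β : ℝ) (hα : 0 ≤ α) (hβ : 0 ≤ β) (a : ℕ × ℕ → ℂ)
    (hsum : Summable (fun p : ℕ × ℕ =>
      ‖a p‖ * (1 + p.1 : ℝ) ^ α * (1 + p.2 : ℝ) ^ β))
    (f : ℂ → ℂ → ℂ)
    (hf : ∀ z w : ℂ, z ∈ ball (0:ℂ) 1 → w ∈ ball (0:ℂ) 1 →
      HasSum (fun p : ℕ × ℕ => a p * z ^ p.1 * w ^ p.2) (f z w))
    (lam : ℂ) (hlam : ‖lam‖ < 1) :
    ∃ c : ℕ × ℕ → ℂ,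
      Summable (fun p : ℕ × ℕ =>
        ‖c p‖ * (1 + p.1 : ℝ) ^ α * (1 + p.2 : ℝ) ^ β) ∧
      (∑' p : ℕ × ℕ, ‖c p‖ * (1 + p.1 : ℝ) ^ α * (1 + p.2 : ℝ) ^ β) ≤
        (∑' p : ℕ × ℕ, ‖a p‖ * (1 + p.1 : ℝ) ^ α * (1 + p.2 : ℝ) ^ β) / (1 - ‖lam‖) ∧
      ∀ z w : ℂ, z ∈ ball (0:ℂ) 1 → w ∈ ball (0:ℂ) 1 →
        (if z = lam then deriv (fun ζ => f ζ w) lam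
          else (f z w - f lam w) / (z - lam)) =
          ∑' p : ℕ × ℕ, c p * z ^ p.1 * w ^ p.2 := by
  obtain ⟨hcterm, hcsum, hcle⟩ := sum12c α β hα hβ a hsum lam hlam
  refine ⟨fun p => ∑' k : ℕ, a (p.1 + 1 + k, p.2) * lam ^ k, hcsum, hcle, ?_⟩
  -- weights are at least one
  have hW1 : ∀ (γ : ℝ) (n : ℕ), 0 ≤ γ → (1:ℝ) ≤ (1 + n : ℝ) ^ γ := fun γ n hγ =>
    Real.one_le_rpow (le_add_of_nonneg_right (Nat.cast_nonneg n)) hγ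
  have hself : ∀ g : ℕ × ℕ → ℂ,
      Summable (fun p : ℕ × ℕ => ‖g p‖ * (1 + p.1 : ℝ) ^ α * (1 + p.2 : ℝ) ^ β) →
      Summable (fun p : ℕ × ℕ => ‖g p‖) := by
    intro g hg
    apply Summable.of_nonneg_of_le (fun p => norm_nonneg _) _ hg
    intro p
    calc ‖g p‖ = ‖g p‖ * 1 * 1 := by ring
      _ ≤ ‖g p‖ * (1 + p.1 : ℝ) ^ α * (1 + p.2 : ℝ) ^ β := by
          apply mul_le_mul (mul_le_mul le_rfl (hW1 α p.1 hα) zero_le_one (norm_nonneg _))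
            (hW1 β p.2 hβ) zero_le_one
          have h0 := norm_nonneg (g p)
          have h1 := (hW1 α p.1 hα)
          positivity
  have hnorm : Summable (fun p : ℕ × ℕ => ‖a p‖) := hself a hsum
  have hcnorm : Summable (fun p : ℕ × ℕ => ‖∑' k : ℕ, a (p.1 + 1 + k, p.2) * lam ^ k‖) :=
    hself _ hcsum
  intro z w hz hw
  rw [mem_ball_zero_iff] at hz hw
  have hlam' : lam ∈ ball (0:ℂ) 1 := mem_ball_zero_iff.mpr hlam
  by_cases hzl : z = lam
  · subst hzl
    rw [if_pos rfl]
    -- continuity of the sum function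
    have hGcont : ContinuousOn (fun x : ℂ => ∑' p : ℕ × ℕ,
        (∑' k : ℕ, a (p.1 + 1 + k, p.2) * z ^ k) * x ^ p.1 * w ^ p.2) (ball (0:ℂ) 1) := by
      apply continuousOn_tsum (u := fun p : ℕ × ℕ =>
        ‖∑' k : ℕ, a (p.1 + 1 + k, p.2) * z ^ k‖)
        (fun p => ((continuous_const.mul (continuous_pow p.1)).mul
          continuous_const).continuousOn) hcnorm
      intro p x hx
      rw [mem_ball_zero_iff] at hx
      simp only [Pi.mul_apply]
      rw [norm_mul, norm_mul, norm_pow, norm_pow]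
      calc ‖∑' k : ℕ, a (p.1 + 1 + k, p.2) * z ^ k‖ * ‖x‖ ^ p.1 * ‖w‖ ^ p.2
          ≤ ‖∑' k : ℕ, a (p.1 + 1 + k, p.2) * z ^ k‖ * 1 * 1 := by
            apply mul_le_mul (mul_le_mul le_rfl (pow_le_one₀ (norm_nonneg x) hx.le)
              (by positivity) (by positivity)) (pow_le_one₀ (norm_nonneg w) hw.le)
              (by positivity) (by positivity)
        _ = ‖∑' k : ℕ, a (p.1 + 1 + k, p.2) * z ^ k‖ := by ring
    have hGat : ContinuousAt (fun x : ℂ => ∑' p : ℕ × ℕ,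
        (∑' k : ℕ, a (p.1 + 1 + k, p.2) * z ^ k) * x ^ p.1 * w ^ p.2) z :=
      hGcont.continuousAt (isOpen_ball.mem_nhds hlam')
    have h1 : Filter.Tendsto (fun x : ℂ => ∑' p : ℕ × ℕ,
        (∑' k : ℕ, a (p.1 + 1 + k, p.2) * z ^ k) * x ^ p.1 * w ^ p.2)
        (nhdsWithin z {z}ᶜ)
        (nhds (∑' p : ℕ × ℕ,
          (∑' k : ℕ, a (p.1 + 1 + k, p.2) * z ^ k) * z ^ p.1 * w ^ p.2)) :=
      hGat.tendsto.mono_left nhdsWithin_le_nhds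
    have heq : slope (fun ζ => f ζ w) z =ᶠ[nhdsWithin z {z}ᶜ]
        (fun x : ℂ => ∑' p : ℕ × ℕ,
          (∑' k : ℕ, a (p.1 + 1 + k, p.2) * z ^ k) * x ^ p.1 * w ^ p.2) := by
      have hball : ∀ᶠ x in nhdsWithin z {z}ᶜ, x ∈ ball (0:ℂ) 1 :=
        eventually_nhdsWithin_of_eventually_nhds (isOpen_ball.eventually_mem hlam')
      filter_upwards [hball, self_mem_nhdsWithin] with x hx hxne
      have hxne' : x ≠ z := hxne
      rw [mem_ball_zero_iff] at hx
      rw [slope_def_field, key12 a hnorm f hf z hz w hw x hx hxne',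
        mul_comm, mul_div_assoc, div_self (sub_ne_zero.mpr hxne'), mul_one]
    have hder : HasDerivAt (fun ζ => f ζ w)
        (∑' p : ℕ × ℕ, (∑' k : ℕ, a (p.1 + 1 + k, p.2) * z ^ k) * z ^ p.1 * w ^ p.2)
        z := by
      rw [hasDerivAt_iff_tendsto_slope]
      exact h1.congr' heq.symm
    exact hder.deriv
  · rw [if_neg hzl]
    rw [key12 a hnorm f hf lam hlam w hw z hz hzl,
      mul_comm, mul_div_assoc, div_self (sub_ne_zero.mpr hzl), mul_one]
end
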